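/- arXiv:1305.4739 — 8 statements merged into one kernel-verified Lean document; each statement's English description precedes it below -/
import Mathlib

section
/- 𝔭 ≤ add(M): the pseudo-intersection number is at most the additivity of the meager ideal. -/
open Cardinal Set Filter MeasureTheory

/-- `F` is a filter base: a family of infinite subsets of `ℕ` such that every finite
subfamily has infinite intersection. -/
def IsFilterBase (F : Set (Set ℕ)) : Prop :=
  (∀ A ∈ F, A.Infinite) ∧ ∀ G ⊆ F, G.Finite → (⋂₀ G).Infinite

/-- `X` is a pseudo-intersection of `F`: `X` is infinite and almost contained in
every member of `F`. -/
def IsPseudoIntersection (X : Set ℕ) (F : Set (Set ℕ)) : Prop :=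
  X.Infinite ∧ ∀ A ∈ F, (X \ A).Finite

/-- The pseudo-intersection number `𝔭`: the least cardinality of a filter base with no
pseudo-intersection. -/
noncomputable def pNumber : Cardinal :=
  sInf { c | ∃ F : Set (Set ℕ), IsFilterBase F ∧
    (¬ ∃ X : Set ℕ, IsPseudoIntersection X F) ∧ #F = c }

/-- `add(M)`: the least cardinality of a family of meager subsets of `ℝ` whose union is
not meager. -/
noncomputable def addMeager : Cardinal :=
  sInf { c | ∃ F : Set (Set ℝ), (∀ s ∈ F, IsMeagre s) ∧ ¬ IsMeagre (⋃₀ F) ∧ #F = c }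

namespace PAddM

open TopologicalSpace

/-- enumeration of pairs of rationals (coding open intervals) -/
noncomputable def e : ℕ → ℚ × ℚ := (Denumerable.eqv (ℚ × ℚ)).symm

lemma e_surjective : Function.Surjective e := (Denumerable.eqv (ℚ × ℚ)).symm.surjective

/-- the k-th basic interval -/
noncomputable def I (k : ℕ) : Set ℝ := Ioo ((e k).1 : ℝ) ((e k).2 : ℝ)

abbrev W := List (ℚ × ℚ)

/-- decoding of natural numbers into finite sequences of rational pairs -/
noncomputable def w : ℕ → W := (Denumerable.eqv W).symm

/-- the k-th interval of the sequence `l` -/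
noncomputable def J (l : W) (k : ℕ) : Set ℝ :=
  Ioo ((l.getD k (0, 0)).1 : ℝ) ((l.getD k (0, 0)).2 : ℝ)

/-- a sequence is good if each of its intervals is a nonempty subinterval of the
corresponding basic interval (whenever the latter is nonempty) -/
def Good (l : W) : Prop :=
  ∀ k < l.length, ((e k).1 : ℝ) < ((e k).2 : ℝ) → (J l k).Nonempty ∧ J l k ⊆ I k

/-- the open set determined by a sequence -/
noncomputable def U (l : W) : Set ℝ := ⋃ k, ⋃ (_ : k < l.length), J l k

/-- member of the filter base associated to a closed nowhere dense set `C` -/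
noncomputable def A (C : Set ℝ) : Set ℕ :=
  { n | Good (w n) ∧ ∀ k < (w n).length, J (w n) k ∩ C = ∅ }

/-- member of the filter base forcing long sequences -/
noncomputable def L (m : ℕ) : Set ℕ := { n | Good (w n) ∧ m ≤ (w n).length }

lemma exists_rat_Ioo_subset {U : Set ℝ} (hU : IsOpen U) (hne : U.Nonempty) :
    ∃ p : ℚ × ℚ, ((p.1 : ℝ) < (p.2 : ℝ)) ∧ Ioo (p.1 : ℝ) (p.2 : ℝ) ⊆ U := by
  obtain ⟨x, hx⟩ := hne
  obtain ⟨ε, hε, hball⟩ := Metric.isOpen_iff.1 hU x hx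
  obtain ⟨a, ha1, ha2⟩ := exists_rat_btwn (show x - ε < x by linarith)
  obtain ⟨b, hb1, hb2⟩ := exists_rat_btwn (show x < x + ε by linarith)
  refine ⟨(a, b), ha2.trans hb1, ?_⟩
  intro y hy
  apply hball
  rw [Real.ball_eq_Ioo]
  exact ⟨lt_of_lt_of_le ha1 (le_of_lt hy.1), lt_of_le_of_lt (le_of_lt hy.2) hb2⟩

/-- building a good sequence of any prescribed length avoiding a closed nowhere
dense set -/
lemma build {C : Set ℝ} (hC : IsClosed C) (hint : interior C = ∅) (n : ℕ) :
    ∃ l : W, l.length = n ∧ Good l ∧ ∀ k < n, J l k ∩ C = ∅ := by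
  have hx : ∀ k : ℕ, ∃ p : ℚ × ℚ,
      (((e k).1 : ℝ) < ((e k).2 : ℝ) →
        ((Ioo (p.1 : ℝ) (p.2 : ℝ)).Nonempty ∧ Ioo (p.1 : ℝ) (p.2 : ℝ) ⊆ I k)) ∧
      Ioo (p.1 : ℝ) (p.2 : ℝ) ∩ C = ∅ := by
    intro k
    by_cases h : ((e k).1 : ℝ) < ((e k).2 : ℝ)
    · have hne : (I k \ C).Nonempty := by
        rw [diff_nonempty]
        intro hsub
        have h1 : I k ⊆ interior C := interior_maximal hsub isOpen_Ioo
        rw [hint, subset_empty_iff] at h1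
        exact (nonempty_Ioo.2 h).ne_empty h1
      obtain ⟨p, hp1, hp2⟩ := exists_rat_Ioo_subset (isOpen_Ioo.sdiff hC) hne
      refine ⟨p, fun _ => ⟨nonempty_Ioo.2 hp1, hp2.trans diff_subset⟩, ?_⟩
      rw [eq_empty_iff_forall_notMem]
      rintro x ⟨hx1, hx2⟩
      exact (hp2 hx1).2 hx2
    · refine ⟨(0, 0), fun h' => absurd h' h, ?_⟩
      simp
  choose g hg1 hg2 using hx
  set l0 : W := List.ofFn (fun i : Fin n => g i) with hl0
  have hlen : l0.length = n := by simp [hl0]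
  have hget : ∀ k, k < n → l0.getD k (0, 0) = g k := by
    intro k hk
    rw [List.getD_eq_getElem _ _ (by simpa [hlen] using hk)]
    simp [hl0, List.getElem_ofFn]
  have hJ : ∀ k, k < n → J l0 k = Ioo ((g k).1 : ℝ) ((g k).2 : ℝ) := by
    intro k hk
    rw [J, hget k hk]
  refine ⟨l0, hlen, ?_, ?_⟩
  · intro k hk hek
    rw [hlen] at hk
    rw [hJ k hk]
    exact hg1 k hek
  · intro k hk
    rw [hJ k hk]
    exact hg2 k

lemma A_inter_L_infinite {C : Set ℝ} (hC : IsClosed C) (hint : interior C = ∅) (m : ℕ) :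
    (A C ∩ L m).Infinite := by
  have h := fun j : ℕ => build hC hint (m + j)
  choose l hlen hgood havoid using h
  apply Set.infinite_of_injective_forall_mem (f := fun j => Denumerable.eqv W (l j))
  · intro i j hij
    have hll : l i = l j := (Denumerable.eqv W).injective hij
    have hlij : m + i = m + j := by rw [← hlen i, ← hlen j, hll]
    omega
  · intro j
    have hw : w (Denumerable.eqv W (l j)) = l j := by
      rw [w]
      exact (Denumerable.eqv W).symm_apply_apply (l j)
    simp only [A, L, Set.mem_inter_iff, Set.mem_setOf_eq, hw]
    refine ⟨⟨hgood j, ?_⟩, hgood j, by rw [hlen j]; omega⟩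
    intro k hk
    rw [hlen j] at hk
    exact havoid j k hk

/-- the collection of potential filter base members -/
def D : Set (Set ℕ) :=
  { S | (∃ C : Set ℝ, IsClosed C ∧ interior C = ∅ ∧ S = A C) ∨ ∃ m, S = L m }

lemma interior_union_empty {s t : Set ℝ} (hs : IsClosed s) (hs' : interior s = ∅)
    (ht' : interior t = ∅) : interior (s ∪ t) = ∅ := by
  have h1 : interior (s ∪ t) \ s ⊆ interior t := by
    apply interior_maximal
    · intro x hx
      rcases (interior_subset hx.1) with h | h
      · exact absurd h hx.2
      · exact h
    · exact isOpen_interior.sdiff hs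
  rw [ht', subset_empty_iff, diff_eq_empty] at h1
  rw [← subset_empty_iff, ← hs']
  exact interior_maximal h1 isOpen_interior

lemma interior_biUnion_empty {ι : Type*} {s : Set ι} (hs : s.Finite) {C : ι → Set ℝ}
    (hcl : ∀ i ∈ s, IsClosed (C i)) (hint : ∀ i ∈ s, interior (C i) = ∅) :
    interior (⋃ i ∈ s, C i) = ∅ := by
  revert hcl hint
  refine Set.Finite.induction_on
    (motive := fun s _ => (∀ i ∈ s, IsClosed (C i)) → (∀ i ∈ s, interior (C i) = ∅) →
      interior (⋃ i ∈ s, C i) = ∅) s hs (by simp) ?_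
  intro a s _ _ ih hcl hint
  rw [biUnion_insert]
  exact interior_union_empty (hcl a (mem_insert a s)) (hint a (mem_insert a s))
    (ih (fun i hi => hcl i (mem_insert_of_mem a hi))
      (fun i hi => hint i (mem_insert_of_mem a hi)))

lemma sInter_infinite {G₀ : Set (Set ℕ)} (h : G₀ ⊆ D) (hfin : G₀.Finite) :
    (⋂₀ G₀).Infinite := by
  have hW : ∀ g ∈ G₀, ∃ (C : Set ℝ) (m : ℕ),
      IsClosed C ∧ interior C = ∅ ∧ A C ∩ L m ⊆ g := by
    intro g hg
    rcases h hg with ⟨C, hC1, hC2, rfl⟩ | ⟨m, rfl⟩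
    · exact ⟨C, 0, hC1, hC2, inter_subset_left⟩
    · exact ⟨∅, m, isClosed_empty, interior_empty, inter_subset_right⟩
  choose! Cg mg hcl hint hsub using hW
  have hCbigcl : IsClosed (⋃ g ∈ G₀, Cg g) := hfin.isClosed_biUnion hcl
  have hCbigint : interior (⋃ g ∈ G₀, Cg g) = ∅ := interior_biUnion_empty hfin hcl hint
  obtain ⟨m0, hm0⟩ := (hfin.image mg).bddAbove
  refine ((A_inter_L_infinite hCbigcl hCbigint m0).mono ?_)
  rintro n ⟨⟨hg1, hg2⟩, ⟨_, hg3⟩⟩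
  rw [mem_sInter]
  intro g hg
  apply hsub g hg
  refine ⟨⟨hg1, fun k hk => ?_⟩, ⟨hg1, ?_⟩⟩
  · have h2 := hg2 k hk
    rw [eq_empty_iff_forall_notMem] at h2 ⊢
    intro x hx
    exact h2 x ⟨hx.1, mem_biUnion hg hx.2⟩
  · exact le_trans (hm0 (mem_image_of_mem mg hg)) hg3

/-- the key lemma: a pseudo-intersection of the filter base makes the union of all
the avoided closed nowhere dense sets meagre -/
lemma meagre_of_pseudo {𝒞 : Set (Set ℝ)} (h𝒞 : ∀ C ∈ 𝒞, IsClosed C ∧ interior C = ∅)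
    {X : Set ℕ} (hXinf : X.Infinite) (hL : ∀ m, (X \ L m).Finite)
    (hA : ∀ C ∈ 𝒞, (X \ A C).Finite) : IsMeagre (⋃₀ 𝒞) := by
  set V : ℕ → Set ℝ := fun m => ⋃ n, ⋃ (_ : n ∈ X ∧ m ≤ n), U (w n) with hV
  have hVopen : ∀ m, IsOpen (V m) := by
    intro m
    exact isOpen_iUnion fun n => isOpen_iUnion fun _ =>
      isOpen_iUnion fun k => isOpen_iUnion fun _ => isOpen_Ioo
  have hVdense : ∀ m, Dense (V m) := by
    intro m
    rw [Real.isTopologicalBasis_Ioo_rat.dense_iff]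
    rintro o ho hone
    simp only [mem_iUnion, mem_singleton_iff] at ho
    obtain ⟨a, b, hab, rfl⟩ := ho
    obtain ⟨k, hk⟩ := e_surjective (a, b)
    have hIk : I k = Ioo (a : ℝ) (b : ℝ) := by rw [I, hk]
    have hinf : ((X ∩ Ici m) \ (X \ L (k + 1))).Infinite := by
      apply Set.Infinite.diff _ (hL (k + 1))
      have hXIci : X ∩ Ici m = X \ Iio m := by ext x; simp [not_lt, mem_Iio]
      rw [hXIci]
      exact hXinf.diff (finite_Iio m)
    obtain ⟨n, ⟨hnX, hnm⟩, hnL⟩ := hinf.nonempty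
    have hnL' : n ∈ L (k + 1) := by
      by_contra hcon
      exact hnL ⟨hnX, hcon⟩
    obtain ⟨hgood, hlen⟩ := hnL'
    have hklt : k < (w n).length := by omega
    have heab : ((e k).1 : ℝ) < ((e k).2 : ℝ) := by
      rw [hk]
      exact_mod_cast hab
    obtain ⟨hJne, hJsub⟩ := hgood k hklt heab
    obtain ⟨x, hx⟩ := hJne
    refine ⟨x, ?_, ?_⟩
    · rw [← hIk]
      exact hJsub hx
    · refine mem_iUnion.2 ⟨n, mem_iUnion.2 ⟨⟨hnX, hnm⟩, ?_⟩⟩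
      exact mem_iUnion.2 ⟨k, mem_iUnion.2 ⟨hklt, hx⟩⟩
  have hcover : ∀ C ∈ 𝒞, ∃ m, C ⊆ (V m)ᶜ := by
    intro C hC
    obtain ⟨m0, hm0⟩ := (hA C hC).bddAbove
    refine ⟨m0 + 1, ?_⟩
    intro x hxC hxV
    simp only [hV, mem_iUnion] at hxV
    obtain ⟨n, ⟨hnX, hnm⟩, hxU⟩ := hxV
    have hnA : n ∈ A C := by
      by_contra hcon
      have h3 := hm0 (⟨hnX, hcon⟩ : n ∈ X \ A C)
      omega
    simp only [U, mem_iUnion] at hxU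
    obtain ⟨k, hk, hxJ⟩ := hxU
    have h4 := hnA.2 k hk
    rw [eq_empty_iff_forall_notMem] at h4
    exact h4 x ⟨hxJ, hxC⟩
  have hmeagre : IsMeagre (⋃ m, (V m)ᶜ) := by
    apply isMeagre_iUnion
    intro m
    show ((V m)ᶜ)ᶜ ∈ residual ℝ
    rw [compl_compl]
    exact residual_of_dense_open (hVopen m) (hVdense m)
  apply hmeagre.mono
  rintro x ⟨C, hC, hxC⟩
  obtain ⟨m, hm⟩ := hcover C hC
  exact mem_iUnion.2 ⟨m, hm hxC⟩

/-- decomposing a meagre set into countably many closed nowhere dense sets -/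
lemma meagre_cover {s : Set ℝ} (hs : IsMeagre s) :
    ∃ C : ℕ → Set ℝ, (∀ j, IsClosed (C j) ∧ interior (C j) = ∅) ∧ s ⊆ ⋃ j, C j := by
  obtain ⟨S, hnwd, hcount, hsub⟩ := isMeagre_iff_countable_union_isNowhereDense.1 hs
  have hS'c : (insert ∅ (closure '' S) : Set (Set ℝ)).Countable := (hcount.image _).insert ∅
  obtain ⟨f, hf⟩ := hS'c.exists_eq_range ⟨∅, mem_insert _ _⟩
  refine ⟨f, ?_, ?_⟩
  · intro j
    have hfj : f j ∈ insert ∅ (closure '' S) := by rw [hf]; exact mem_range_self j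
    rcases hfj with h | ⟨t, ht, hteq⟩
    · rw [h]
      exact ⟨isClosed_empty, interior_empty⟩
    · rw [← hteq]
      exact ⟨isClosed_closure, hnwd t ht⟩
  · intro x hx
    obtain ⟨t, ht, hxt⟩ := hsub hx
    have hmem : closure t ∈ insert ∅ (closure '' S) :=
      mem_insert_of_mem _ (mem_image_of_mem _ ht)
    rw [hf] at hmem
    obtain ⟨j, hj⟩ := hmem
    exact mem_iUnion.2 ⟨j, hj ▸ subset_closure hxt⟩

end PAddM

open PAddM in
/-- `𝔭 ≤ add(M)`. -/
theorem pNumber_le_addMeager : pNumber ≤ addMeager := by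
  unfold addMeager
  apply le_csInf
  · -- the defining set of addMeager is nonempty
    refine ⟨#(range (fun x : ℝ => ({x} : Set ℝ))), range (fun x : ℝ => ({x} : Set ℝ)), ?_, ?_, rfl⟩
    · rintro s ⟨x, rfl⟩
      show ({x} : Set ℝ)ᶜ ∈ residual ℝ
      exact residual_of_dense_open isOpen_compl_singleton (dense_compl_singleton x)
    · intro h
      have huniv : ⋃₀ range (fun x : ℝ => ({x} : Set ℝ)) = Set.univ := by
        ext x; simp
      rw [huniv] at h
      have hres : (Set.univ : Set ℝ)ᶜ ∈ residual ℝ := h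
      rw [compl_univ] at hres
      exact (dense_of_mem_residual hres).nonempty.ne_empty rfl
  · rintro c ⟨F, hmeag, hnm, rfl⟩
    -- F is uncountable
    have hunc : ℵ₀ ≤ #F := by
      by_contra hcon
      push_neg at hcon
      have hcnt : F.Countable := countable_coe_iff.1 (mk_le_aleph0_iff.1 hcon.le)
      apply hnm
      show (⋃₀ F)ᶜ ∈ residual ℝ
      rw [compl_sUnion, countable_sInter_mem (hcnt.image _)]
      rintro t ⟨s, hs, rfl⟩
      exact hmeag s hs
    -- decompose each member of F into closed nowhere dense pieces
    have hcov : ∀ s : F, ∃ C : ℕ → Set ℝ,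
        (∀ j, IsClosed (C j) ∧ interior (C j) = ∅) ∧ (s : Set ℝ) ⊆ ⋃ j, C j :=
      fun s => meagre_cover (hmeag s s.2)
    choose C hCprop hCsub using hcov
    set Gfun : (F × ℕ) ⊕ ℕ → Set ℕ := Sum.elim (fun p => A (C p.1 p.2)) L with hGfun
    set G : Set (Set ℕ) := range Gfun with hG
    have hGD : G ⊆ D := by
      rintro g ⟨i, rfl⟩
      rcases i with ⟨s, j⟩ | m
      · exact Or.inl ⟨C s j, (hCprop s j).1, (hCprop s j).2, rfl⟩
      · exact Or.inr ⟨m, rfl⟩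
    have hFB : IsFilterBase G := by
      constructor
      · intro a ha
        have h5 := sInter_infinite (G₀ := {a}) (by simpa using hGD ha) (finite_singleton a)
        rwa [sInter_singleton] at h5
      · intro G₀ hsub hfin
        exact sInter_infinite (hsub.trans hGD) hfin
    have hnoPI : ¬ ∃ X : Set ℕ, IsPseudoIntersection X G := by
      rintro ⟨X, hXinf, hXsub⟩
      apply hnm
      have h1 : IsMeagre (⋃₀ { t | ∃ (s : F) (j : ℕ), t = C s j }) := by
        apply meagre_of_pseudo
        · rintro t ⟨s, j, rfl⟩
          exact hCprop s j
        · exact hXinf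
        · intro m
          exact hXsub (L m) ⟨Sum.inr m, rfl⟩
        · rintro t ⟨s, j, rfl⟩
          exact hXsub _ ⟨Sum.inl (s, j), rfl⟩
      apply h1.mono
      rintro x ⟨s, hs, hxs⟩
      obtain ⟨j, hj⟩ := mem_iUnion.1 (hCsub ⟨s, hs⟩ hxs)
      exact ⟨C ⟨s, hs⟩ j, ⟨⟨s, hs⟩, j, rfl⟩, hj⟩
    have hple : pNumber ≤ #G := csInf_le' ⟨G, hFB, hnoPI, rfl⟩
    refine hple.trans ?_
    calc #G ≤ #((F × ℕ) ⊕ ℕ) := mk_range_le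
    _ = #F * ℵ₀ + ℵ₀ := by simp [Cardinal.mk_sum, Cardinal.mk_prod, Cardinal.lift_id]
    _ = #F := by rw [Cardinal.mul_aleph0_eq hunc, Cardinal.add_eq_left hunc hunc]
end

section
/- 𝔰 ≤ 𝔡: the splitting number is at most the dominating number. -/
open Cardinal Set Filter

/-- `A` splits `B`: both `A ∩ B` and `B \ A` are infinite. -/
def Splits (A B : Set ℕ) : Prop := (A ∩ B).Infinite ∧ (B \ A).Infinite

/-- The splitting number `𝔰`: the least cardinality of a family `S` of infinite subsets
of `ℕ` such that every infinite `B ⊆ ℕ` is split by some member of `S`. -/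
noncomputable def sNumber : Cardinal :=
  sInf { c | ∃ S : Set (Set ℕ), (∀ A ∈ S, A.Infinite) ∧
    (∀ B : Set ℕ, B.Infinite → ∃ A ∈ S, Splits A B) ∧ #S = c }

/-- `f <* g`: `f n < g n` for all but finitely many `n`. -/
def DomLT (f g : ℕ → ℕ) : Prop := ∀ᶠ n in Filter.atTop, f n < g n

/-- The dominating number `𝔡`: the least cardinality of a family `D ⊆ ω^ω` such that
every `f ∈ ω^ω` satisfies `f <* g` for some `g ∈ D`. -/
noncomputable def dNumber : Cardinal :=
  sInf { c | ∃ D : Set (ℕ → ℕ), (∀ f : ℕ → ℕ, ∃ g ∈ D, DomLT f g) ∧ #D = c }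

namespace SLeD

/-- A strictly increasing majorant of `g`. -/
def G (g : ℕ → ℕ) (n : ℕ) : ℕ := (Finset.range (n+1)).sup g + n + 1

lemma lt_G (g : ℕ → ℕ) (n : ℕ) : n < G g n := by
  unfold G; omega

lemma g_lt_G (g : ℕ → ℕ) (n : ℕ) : g n < G g n := by
  have : g n ≤ (Finset.range (n+1)).sup g :=
    Finset.le_sup (Finset.self_mem_range_succ n)
  unfold G; omega

lemma G_mono (g : ℕ → ℕ) : Monotone (G g) := by
  intro a b hab
  unfold G
  have : (Finset.range (a+1)).sup g ≤ (Finset.range (b+1)).sup g :=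
    Finset.sup_mono (Finset.range_subset_range.2 (by omega))
  omega

/-- Iterates of `G g` starting at `0`. -/
def H (g : ℕ → ℕ) : ℕ → ℕ
  | 0 => 0
  | k+1 => G g (H g k)

lemma H_strictMono (g : ℕ → ℕ) : StrictMono (H g) :=
  strictMono_nat_of_lt_succ fun k => lt_G g (H g k)

lemma le_H (g : ℕ → ℕ) (k : ℕ) : k ≤ H g k := (H_strictMono g).le_apply

/-- The index of the interval `[H g k, H g (k+1))` containing `m`. -/
def idx (g : ℕ → ℕ) (m : ℕ) : ℕ := Nat.findGreatest (fun k => H g k ≤ m) m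

lemma idx_eq (g : ℕ → ℕ) {m k : ℕ} (h1 : H g k ≤ m) (h2 : m < H g (k+1)) :
    idx g m = k := by
  have hk : k ≤ m := le_trans (le_H g k) h1
  have hle : k ≤ idx g m := Nat.le_findGreatest hk h1
  have hspec : H g (idx g m) ≤ m := Nat.findGreatest_spec (P := fun k => H g k ≤ m) hk h1
  rcases Nat.lt_or_ge k (idx g m) with h | h
  · exfalso
    have : H g (k+1) ≤ H g (idx g m) := (H_strictMono g).monotone (by omega)
    omega
  · omega

/-- The splitting set associated to `g`. -/
def A (g : ℕ → ℕ) : Set ℕ := {m | Even (idx g m)}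

lemma idx_H (g : ℕ → ℕ) (k : ℕ) : idx g (H g k) = k :=
  idx_eq g le_rfl (H_strictMono g (Nat.lt_succ_self k))

lemma A_infinite (g : ℕ → ℕ) : (A g).Infinite := by
  apply Set.infinite_of_injective_forall_mem (f := fun k : ℕ => H g (2*k))
  · intro a b hab
    have := (H_strictMono g).injective hab
    omega
  · intro k
    show Even (idx g (H g (2*k)))
    rw [idx_H]
    exact even_two_mul k

theorem splits (g : ℕ → ℕ) {B : Set ℕ} (hB : B.Infinite) (h : DomLT (fun n => (hB.exists_gt n).choose) g) :
    Splits (A g) B := by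
  set f : ℕ → ℕ := fun n => (hB.exists_gt n).choose with hf
  have hfB : ∀ n, f n ∈ B := fun n => (hB.exists_gt n).choose_spec.1
  have hflt : ∀ n, n < f n := fun n => (hB.exists_gt n).choose_spec.2
  obtain ⟨N, hN⟩ := h.exists_forall_of_atTop
  -- for k ≥ N, f (H g k) lies in B with idx = k
  have key : ∀ k, N ≤ k → idx g (f (H g k)) = k := by
    intro k hk
    have hk' : N ≤ H g k := le_trans hk (le_H g k)
    have h1 : H g k ≤ f (H g k) := (hflt _).le
    have h2 : f (H g k) < H g (k+1) := by
      have := hN (H g k) hk'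
      have := g_lt_G g (H g k)
      show f (H g k) < G g (H g k)
      omega
    exact idx_eq g h1 h2
  constructor
  · apply Set.infinite_of_injective_forall_mem (f := fun j : ℕ => f (H g (2*(N+j))))
    · intro a b hab
      have hab' : f (H g (2*(N+a))) = f (H g (2*(N+b))) := hab
      have : idx g (f (H g (2*(N+a)))) = idx g (f (H g (2*(N+b)))) := by rw [hab']
      rw [key _ (by omega), key _ (by omega)] at this
      omega
    · intro j
      refine ⟨?_, hfB _⟩
      show Even (idx g (f (H g (2*(N+j)))))
      rw [key _ (by omega)]
      exact even_two_mul _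
  · apply Set.infinite_of_injective_forall_mem (f := fun j : ℕ => f (H g (2*(N+j)+1)))
    · intro a b hab
      have hab' : f (H g (2*(N+a)+1)) = f (H g (2*(N+b)+1)) := hab
      have : idx g (f (H g (2*(N+a)+1))) = idx g (f (H g (2*(N+b)+1))) := by rw [hab']
      rw [key _ (by omega), key _ (by omega)] at this
      omega
    · intro j
      refine ⟨hfB _, ?_⟩
      show ¬ Even (idx g (f (H g (2*(N+j)+1))))
      rw [key _ (by omega)]
      simp [Nat.even_add_one, parity_simps]

end SLeD

/-- `𝔰 ≤ 𝔡`. -/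
theorem sNumber_le_dNumber : sNumber ≤ dNumber := by
  apply le_csInf
  · refine ⟨#(Set.univ : Set (ℕ → ℕ)), Set.univ, fun f => ⟨fun n => f n + 1, trivial, ?_⟩, rfl⟩
    exact Filter.Eventually.of_forall fun n => Nat.lt_succ_self _
  · rintro c ⟨D, hdom, rfl⟩
    have hmem : #(SLeD.A '' D) ∈ { c | ∃ S : Set (Set ℕ), (∀ A ∈ S, A.Infinite) ∧
        (∀ B : Set ℕ, B.Infinite → ∃ A ∈ S, Splits A B) ∧ #S = c } := by
      refine ⟨SLeD.A '' D, ?_, ?_, rfl⟩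
      · rintro A' ⟨g, -, rfl⟩
        exact SLeD.A_infinite g
      · intro B hB
        obtain ⟨g, hgD, hg⟩ := hdom (fun n => (hB.exists_gt n).choose)
        exact ⟨SLeD.A g, ⟨g, hgD, rfl⟩, SLeD.splits g hB hg⟩
    calc sNumber ≤ #(SLeD.A '' D) := csInf_le (OrderBot.bddBelow _) hmem
      _ ≤ #D := Cardinal.mk_image_le
end

section
/- 𝔟 ≤ 𝔯: the unbounding number is at most the reaping number. -/
open Cardinal Set Filter

/-- The unbounding number `𝔟`: the least cardinality of a family `F ⊆ ω^ω` such that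
for every `g ∈ ω^ω` some `f ∈ F` satisfies `¬(f <* g)`. -/
noncomputable def bNumber : Cardinal :=
  sInf { c | ∃ F : Set (ℕ → ℕ), (∀ g : ℕ → ℕ, ∃ f ∈ F, ¬ DomLT f g) ∧ #F = c }

/-- The reaping number `𝔯`: the least cardinality of a family `R` of infinite subsets of
`ℕ` such that no single infinite `A ⊆ ℕ` splits every member of `R`. -/
noncomputable def rNumber : Cardinal :=
  sInf { c | ∃ R : Set (Set ℕ), (∀ B ∈ R, B.Infinite) ∧
    (¬ ∃ A : Set ℕ, A.Infinite ∧ ∀ B ∈ R, Splits A B) ∧ #R = c }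

/-- the least element of `B` greater than `n` -/
noncomputable def nextFn (B : Set ℕ) (n : ℕ) : ℕ := sInf {m | m ∈ B ∧ n < m}

lemma nextFn_spec {B : Set ℕ} (hB : B.Infinite) (n : ℕ) :
    nextFn B n ∈ B ∧ n < nextFn B n := by
  have hne : {m | m ∈ B ∧ n < m}.Nonempty := by
    obtain ⟨m, hm, hlt⟩ := hB.exists_gt n
    exact ⟨m, hm, hlt⟩
  exact Nat.sInf_mem hne

lemma infinite_of_forall_gt {S : Set ℕ} (h : ∀ N, ∃ m ∈ S, N < m) : S.Infinite := by
  intro hfin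
  obtain ⟨b, hb⟩ := hfin.bddAbove
  obtain ⟨m, hm, hlt⟩ := h b
  exact absurd (hb hm) (not_le.mpr hlt)

lemma exists_splitter {R : Set (Set ℕ)} (hR : ∀ B ∈ R, B.Infinite)
    (g : ℕ → ℕ) (hg : ∀ B ∈ R, DomLT (nextFn B) g) :
    ∃ A : Set ℕ, A.Infinite ∧ ∀ B ∈ R, Splits A B := by
  -- iterate a bound function
  set a : ℕ → ℕ := fun k => Nat.rec 0 (fun _ p => max (g p) p + 1) k with ha
  have ha_succ : ∀ k, a (k + 1) = max (g (a k)) (a k) + 1 := fun k => rfl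
  have ha_lt : ∀ k, a k < a (k + 1) := by
    intro k; rw [ha_succ]; omega
  have ha_mono : StrictMono a := strictMono_nat_of_lt_succ ha_lt
  have ha_g : ∀ k, g (a k) ≤ a (k + 1) := by
    intro k; rw [ha_succ]; omega
  have ha_ge : ∀ k, k ≤ a k := fun k => Nat.le_of_lt_succ (ha_mono.lt_iff_lt.mpr (Nat.lt_succ_self k) |>.trans_le (le_refl _)) |> fun _ => ha_mono.le_apply
  -- the splitting set: union of intervals (a (2k), a (2k+1)]
  refine ⟨{m | ∃ k, a (2 * k) < m ∧ m ≤ a (2 * k + 1)}, ?_, ?_⟩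
  · apply infinite_of_forall_gt
    intro N
    refine ⟨a (2 * N + 1), ⟨N, ha_lt (2 * N), le_refl _⟩, ?_⟩
    have := ha_ge (2 * N + 1); omega
  · intro B hB
    obtain ⟨NB, hNB⟩ := Filter.eventually_atTop.mp (hg B hB)
    -- for every j with a j ≥ NB, B has an element in (a j, a (j+1)]
    have key : ∀ j, NB ≤ a j → ∃ m ∈ B, a j < m ∧ m ≤ a (j + 1) := by
      intro j hj
      obtain ⟨hmB, hmgt⟩ := nextFn_spec (hR B hB) (a j)
      refine ⟨nextFn B (a j), hmB, hmgt, ?_⟩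
      have h1 : nextFn B (a j) < g (a j) := hNB (a j) hj
      have h2 := ha_g j
      omega
    constructor
    · apply infinite_of_forall_gt
      intro N
      set k := max N NB with hk
      have hak : NB ≤ a (2 * k) := le_trans (le_trans (le_max_right N NB) (by omega : k ≤ 2 * k)) (ha_ge (2 * k))
      obtain ⟨m, hmB, hm1, hm2⟩ := key (2 * k) hak
      refine ⟨m, ⟨⟨k, hm1, hm2⟩, hmB⟩, ?_⟩
      have h3 : N ≤ a (2 * k) := le_trans (le_trans (le_max_left N NB) (by omega : k ≤ 2 * k)) (ha_ge (2 * k))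
      omega
    · apply infinite_of_forall_gt
      intro N
      set k := max N NB with hk
      have hak : NB ≤ a (2 * k + 1) := le_trans (le_trans (le_max_right N NB) (by omega : k ≤ 2 * k + 1)) (ha_ge (2 * k + 1))
      obtain ⟨m, hmB, hm1, hm2⟩ := key (2 * k + 1) hak
      refine ⟨m, ⟨hmB, ?_⟩, ?_⟩
      · rintro ⟨k', hk'1, hk'2⟩
        rcases lt_or_gt_of_ne (show 2 * k' ≠ 2 * k + 1 by omega) with h | h
        · have : 2 * k' + 1 ≤ 2 * k + 1 := by omega
          have := ha_mono.monotone this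
          omega
        · have hcon : a (2 * k + 1 + 1) ≤ a (2 * k') := ha_mono.monotone (show 2 * k + 1 + 1 ≤ 2 * k' by omega)
          omega
      · have h3 : N ≤ a (2 * k + 1) := le_trans (le_trans (le_max_left N NB) (by omega : k ≤ 2 * k + 1)) (ha_ge (2 * k + 1))
        omega

/-- `𝔟 ≤ 𝔯`. -/
theorem bNumber_le_rNumber : bNumber ≤ rNumber := by
  -- the defining set of rNumber is nonempty
  have hne : { c | ∃ R : Set (Set ℕ), (∀ B ∈ R, B.Infinite) ∧
      (¬ ∃ A : Set ℕ, A.Infinite ∧ ∀ B ∈ R, Splits A B) ∧ #R = c }.Nonempty := by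
    refine ⟨#{B : Set ℕ | B.Infinite}, {B : Set ℕ | B.Infinite}, fun B hB => hB, ?_, rfl⟩
    rintro ⟨A, hA, hsplit⟩
    have := (hsplit A hA).2
    simp [Set.diff_self] at this
  obtain ⟨R, hRinf, hRreap, hRcard⟩ := csInf_mem hne
  -- the unbounded family
  set F : Set (ℕ → ℕ) := nextFn '' R with hF
  have hFub : ∀ g : ℕ → ℕ, ∃ f ∈ F, ¬ DomLT f g := by
    intro g
    by_contra h
    push_neg at h
    exact hRreap (exists_splitter hRinf g (fun B hB => h (nextFn B) ⟨B, hB, rfl⟩))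
  have h1 : bNumber ≤ #F := csInf_le' ⟨F, hFub, rfl⟩
  have h2 : #F ≤ #R := Cardinal.mk_image_le
  calc bNumber ≤ #F := h1
    _ ≤ #R := h2
    _ = rNumber := hRcard
end

section
/- 𝔰 ≤ non(M): the splitting number is at most the uniformity of the meager ideal. -/
open Cardinal Set Filter

/-- `non(M)`: the least cardinality of a non-meager subset of `ℝ`. -/
noncomputable def nonMeager : Cardinal :=
  sInf { c | ∃ S : Set ℝ, ¬ IsMeagre S ∧ #S = c }

/-- The set of binary digit positions where `x` has digit 1. -/
def Aset (x : ℝ) : Set ℕ := {n | ⌊x * 2 ^ n⌋ % 2 = 1}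

/-- Reals whose digits on `B` beyond `m` are all of parity `b`. -/
def badSet (B : Set ℕ) (m : ℕ) (b : ℤ) : Set ℝ :=
  {x | ∀ n ∈ B, m ≤ n → ⌊x * 2 ^ n⌋ % 2 = b}

lemma IsNowhereDense.isMeagre' {s : Set ℝ} (hs : IsNowhereDense s) : IsMeagre s := by
  rw [isMeagre_iff_countable_union_isNowhereDense]
  exact ⟨{s}, by simpa using hs, countable_singleton s, by simp⟩

lemma nowhereDense_badSet (B : Set ℕ) (hB : B.Infinite) (m : ℕ) (b : ℤ) :
    IsNowhereDense (badSet B m b) := by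
  rw [IsNowhereDense, eq_empty_iff_forall_notMem]
  intro x hx
  rw [mem_interior_iff_mem_nhds, Metric.mem_nhds_iff] at hx
  obtain ⟨ε, hε, hball⟩ := hx
  obtain ⟨N, hN⟩ := pow_unbounded_of_one_lt (4 / ε) (y := (2:ℝ)) one_lt_two
  obtain ⟨n, hnB, hn⟩ := hB.exists_gt (max m N)
  have hnm : m ≤ n := le_of_lt (lt_of_le_of_lt (le_max_left _ _) hn)
  set p : ℝ := 2 ^ n with hp_def
  have hp : (0:ℝ) < p := by positivity
  have hp4 : 4 / ε < p := by
    refine lt_of_lt_of_le hN ?_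
    exact pow_le_pow_right₀ one_le_two (le_of_lt (lt_of_le_of_lt (le_max_right _ _) hn))
  have hεp : 4 < ε * p := by
    rw [div_lt_iff₀ hε] at hp4; linarith [hp4]
  set j0 : ℤ := ⌊(x - ε) * p⌋ with hj0_def
  have hj0l : (j0 : ℝ) ≤ (x - ε) * p := Int.floor_le _
  have hj0u : (x - ε) * p < j0 + 1 := Int.lt_floor_add_one _
  set j : ℤ := if (j0 + 1) % 2 = b then j0 + 2 else j0 + 1 with hj_def
  have hjb : j % 2 ≠ b := by
    rcases eq_or_ne ((j0 + 1) % 2) b with h | h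
    · simp only [hj_def, if_pos h]; omega
    · simp only [hj_def, if_neg h]; exact h
  have hjl : j0 + 1 ≤ j := by rw [hj_def]; split <;> omega
  have hju : j ≤ j0 + 2 := by rw [hj_def]; split <;> omega
  have hjlR : (x - ε) * p < j := by
    have : ((j0:ℝ) + 1) ≤ (j:ℝ) := by exact_mod_cast hjl
    linarith
  have hjuR : (j:ℝ) + 1 < (x + ε) * p := by
    have : (j:ℝ) ≤ (j0:ℝ) + 2 := by exact_mod_cast hju
    have h2 : (x + ε) * p = (x - ε) * p + 2 * (ε * p) := by ring
    linarith
  -- midpoint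
  set y : ℝ := ((j:ℝ) + 1/2) / p with hy_def
  have hyl : (j:ℝ) / p < y := by
    rw [hy_def, div_lt_div_iff_of_pos_right hp]; linarith
  have hyu : y < ((j:ℝ) + 1) / p := by
    rw [hy_def, div_lt_div_iff_of_pos_right hp]; linarith
  have hjlp : x - ε < (j:ℝ) / p := (lt_div_iff₀ hp).2 hjlR
  have hjup : ((j:ℝ) + 1) / p < x + ε := (div_lt_iff₀ hp).2 hjuR
  have hyball : y ∈ Metric.ball x ε := by
    rw [Metric.mem_ball, Real.dist_eq, abs_lt]
    constructor <;> linarith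
  have hyc : y ∈ closure (badSet B m b) := hball hyball
  rw [Metric.mem_closure_iff] at hyc
  obtain ⟨z, hz, hdz⟩ := hyc (1 / (2 * p)) (by positivity)
  rw [Real.dist_eq, abs_lt] at hdz
  have hzl : (j:ℝ) / p < z := by
    have : y - 1 / (2 * p) = (j:ℝ) / p := by
      rw [hy_def]; field_simp; ring
    linarith [hdz.2]
  have hzu : z < ((j:ℝ) + 1) / p := by
    have : y + 1 / (2 * p) = ((j:ℝ) + 1) / p := by
      rw [hy_def]; field_simp; ring
    linarith [hdz.1]
  have hfloor : ⌊z * p⌋ = j := by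
    rw [Int.floor_eq_iff]
    constructor
    · nlinarith [(div_lt_iff₀ hp).1 hzl]
    · nlinarith [(lt_div_iff₀ hp).1 hzu]
  have := hz n hnB hnm
  rw [← hp_def, hfloor] at this
  exact hjb this

lemma meagre_failure (B : Set ℕ) (hB : B.Infinite) :
    IsMeagre {x : ℝ | ¬ Splits (Aset x) B} := by
  have h1 : IsMeagre (⋃ m : ℕ, badSet B m 0 ∪ badSet B m 1) := by
    apply isMeagre_iUnion
    intro m
    have := (nowhereDense_badSet B hB m 0).isMeagre'
    have := (nowhereDense_badSet B hB m 1).isMeagre'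
    rw [IsMeagre, compl_union]
    exact inter_mem (nowhereDense_badSet B hB m 0).isMeagre'
      (nowhereDense_badSet B hB m 1).isMeagre'
  refine h1.mono ?_
  intro x hx
  simp only [mem_setOf_eq, Splits, not_and_or, Set.not_infinite] at hx
  rcases hx with h | h
  · -- A_x ∩ B finite : digits eventually 0 on B
    obtain ⟨M, hM⟩ := h.bddAbove
    refine mem_iUnion.2 ⟨M + 1, Or.inl ?_⟩
    intro n hnB hn
    have hnA : n ∉ Aset x := by
      intro hA
      have : n ≤ M := hM ⟨hA, hnB⟩
      omega
    simp only [Aset, mem_setOf_eq] at hnA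
    omega
  · obtain ⟨M, hM⟩ := h.bddAbove
    refine mem_iUnion.2 ⟨M + 1, Or.inr ?_⟩
    intro n hnB hn
    by_contra hne
    have : n ≤ M := hM ⟨hnB, fun hA => hne (by simpa [Aset] using hA)⟩
    omega

/-- `𝔰 ≤ non(M)`. -/
theorem sNumber_le_nonMeager : sNumber ≤ nonMeager := by
  have hne : {c | ∃ S : Set ℝ, ¬ IsMeagre S ∧ #S = c}.Nonempty := by
    refine ⟨#(univ : Set ℝ), univ, ?_, rfl⟩
    intro h
    rw [IsMeagre, compl_univ] at h
    have := dense_of_mem_residual h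
    rw [dense_iff_closure_eq, closure_empty] at this
    exact (Set.empty_ne_univ this)
  obtain ⟨X, hX, hXc⟩ := csInf_mem hne
  set S : Set (Set ℕ) := {A | A.Infinite ∧ ∃ x ∈ X, Aset x = A} with hS_def
  have hsplit : ∀ B : Set ℕ, B.Infinite → ∃ A ∈ S, Splits A B := by
    intro B hB
    have hmeag := meagre_failure B hB
    have : ¬ X ⊆ {x : ℝ | ¬ Splits (Aset x) B} := fun hsub => hX (hmeag.mono hsub)
    obtain ⟨x, hxX, hxs⟩ := not_subset.1 this
    simp only [mem_setOf_eq, not_not] at hxs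
    refine ⟨Aset x, ⟨?_, x, hxX, rfl⟩, hxs⟩
    exact hxs.1.mono inter_subset_left
  have hcard : #S ≤ #X := by
    have hsub : S ⊆ Aset '' X := fun A hA => by
      obtain ⟨-, x, hx, rfl⟩ := hA
      exact mem_image_of_mem _ hx
    exact le_trans (mk_le_mk_of_subset hsub) mk_image_le
  have h1 : sNumber ≤ #S :=
    csInf_le' ⟨S, fun A hA => hA.1, hsplit, rfl⟩
  calc sNumber ≤ #S := h1
    _ ≤ #X := hcard
    _ = nonMeager := hXc
end

section
/- 𝔰 ≤ non(N): the splitting number is at most the uniformity of the null ideal. -/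
open Cardinal Set Filter MeasureTheory

/-- `non(N)`: the least cardinality of a subset of `ℝ` that is not Lebesgue-null. -/
noncomputable def nonNull : Cardinal :=
  sInf { c | ∃ S : Set ℝ, volume S ≠ 0 ∧ #S = c }

def dig (n : ℕ) (x : ℝ) : Prop := ⌊x * 2^(n+1)⌋ % 2 = 1

lemma floor_add_aux {y : ℝ} {t : ℕ} (ht : 1 ≤ t) (h : ⌊y * 2^t⌋ % 2 = 0) :
    ⌊y + ((2:ℝ)^t)⁻¹⌋ = ⌊y⌋ := by
  set k := ⌊y * 2^t⌋ with hk
  set q := ⌊y⌋ with hq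
  have h2t : (0:ℝ) < 2^t := by positivity
  have hk0 : (k:ℝ) ≤ y * 2^t := Int.floor_le _
  have hk1 : y * 2^t < k + 1 := Int.lt_floor_add_one _
  have hq0 : (q:ℝ) ≤ y := Int.floor_le _
  have hq1 : y < q + 1 := Int.lt_floor_add_one _
  have hkM : k < (q+1) * 2^t := by
    have : (k:ℝ) < ((q+1) * 2^t : ℤ) := by push_cast; nlinarith
    exact_mod_cast this
  have hE : ((q+1) * 2^t) % 2 = 0 := by
    obtain ⟨t', rfl⟩ : ∃ t', t = t' + 1 := ⟨t - 1, by omega⟩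
    have : (q+1) * 2^(t'+1) = ((q+1) * 2^t') * 2 := by ring
    omega
  have hk2' : (k:ℝ) + 2 ≤ ((q:ℝ)+1) * 2^t := by
    have hk2 : (k : ℤ) + 2 ≤ (q+1) * 2^t := by omega
    exact_mod_cast hk2
  have hinv : ((2:ℝ)^t)⁻¹ * 2^t = 1 := inv_mul_cancel₀ (ne_of_gt h2t)
  rw [Int.floor_eq_iff]
  · constructor
    · have : (0:ℝ) < (2^t)⁻¹ := by positivity
      push_cast; linarith
    · push_cast; nlinarith


lemma floor_add_c (n : ℕ) (x : ℝ) :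
    ⌊(x + ((2:ℝ)^(n+1))⁻¹) * 2^(n+1)⌋ = ⌊x * 2^(n+1)⌋ + 1 := by
  have h : (x + ((2:ℝ)^(n+1))⁻¹) * 2^(n+1) = x * 2^(n+1) + 1 := by
    field_simp
  rw [h, ← Int.floor_add_intCast (x * 2^(n+1)) 1]; norm_num

lemma dig_add_iff (n : ℕ) (x : ℝ) :
    dig n (x + ((2:ℝ)^(n+1))⁻¹) ↔ ¬ dig n x := by
  unfold dig
  rw [floor_add_c]
  omega

lemma dig_add_lt {m n : ℕ} (h : m < n) {x : ℝ} (hx : ¬ dig n x) :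
    (dig m (x + ((2:ℝ)^(n+1))⁻¹) ↔ dig m x) := by
  unfold dig at *
  have h0 : ⌊x * 2^(n+1)⌋ % 2 = 0 := by omega
  set t := n - m with hts
  have ht : 1 ≤ t := by omega
  have hnm : n + 1 = (m+1) + t := by omega
  have key : ⌊x * 2^(m+1) + ((2:ℝ)^t)⁻¹⌋ = ⌊x * 2^(m+1)⌋ := by
    apply floor_add_aux ht
    have : x * 2^(m+1) * 2^t = x * 2^(n+1) := by
      rw [hnm, pow_add]; ring
    rw [this]; exact h0
  have heq : (x + ((2:ℝ)^(n+1))⁻¹) * 2^(m+1) = x * 2^(m+1) + ((2:ℝ)^t)⁻¹ := by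
    rw [hnm, pow_add]
    field_simp
  rw [heq, key]

lemma add_c_lt_one {n : ℕ} {x : ℝ} (hx : x < 1) (h : ¬ dig n x) :
    x + ((2:ℝ)^(n+1))⁻¹ < 1 := by
  unfold dig at h
  have h0 : ⌊x * 2^(n+1)⌋ % 2 = 0 := by omega
  have h2 : (0:ℝ) < 2^(n+1) := by positivity
  have hk1 : x * 2^(n+1) < ⌊x * 2^(n+1)⌋ + 1 := Int.lt_floor_add_one _
  have hlt : ⌊x * 2^(n+1)⌋ < (2^(n+1) : ℤ) := by
    have : (⌊x * 2^(n+1)⌋ : ℝ) < (2^(n+1):ℤ) := by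
      push_cast
      calc (⌊x * 2^(n+1)⌋ : ℝ) ≤ x * 2^(n+1) := Int.floor_le _
        _ < 1 * 2^(n+1) := by nlinarith
        _ = 2^(n+1) := by ring
    exact_mod_cast this
  have hE : (2^(n+1) : ℤ) % 2 = 0 := by
    have : (2^(n+1):ℤ) = 2^n * 2 := by ring
    omega
  have : ⌊x * 2^(n+1)⌋ + 2 ≤ (2^(n+1):ℤ) := by omega
  have h2' : (⌊x * 2^(n+1)⌋:ℝ) + 2 ≤ ((2^(n+1):ℤ):ℝ) := by exact_mod_cast this
  push_cast at h2'
  have hinv : ((2:ℝ)^(n+1))⁻¹ * 2^(n+1) = 1 := inv_mul_cancel₀ (ne_of_gt h2)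
  nlinarith

lemma c_le_of_dig {n : ℕ} {x : ℝ} (hx : 0 ≤ x) (h : dig n x) :
    ((2:ℝ)^(n+1))⁻¹ ≤ x := by
  unfold dig at h
  have h2 : (0:ℝ) < 2^(n+1) := by positivity
  have hnn : 0 ≤ ⌊x * 2^(n+1)⌋ := Int.floor_nonneg.mpr (by positivity)
  have h1 : 1 ≤ ⌊x * 2^(n+1)⌋ := by omega
  have h1' : (1:ℝ) ≤ x * 2^(n+1) := by
    calc (1:ℝ) = ((1:ℤ):ℝ) := by norm_num
      _ ≤ (⌊x * 2^(n+1)⌋ : ℝ) := by exact_mod_cast h1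
      _ ≤ x * 2^(n+1) := Int.floor_le _
  rw [inv_le_iff_one_le_mul₀ h2]
  linarith

lemma dig_int_add (n : ℕ) (x : ℝ) (j : ℤ) : dig n (x + j) ↔ dig n x := by
  unfold dig
  have h : (x + (j:ℝ)) * 2^(n+1) = x * 2^(n+1) + (j * 2^(n+1) : ℤ) := by push_cast; ring
  rw [h, Int.floor_add_intCast]
  have : (j * 2^(n+1) : ℤ) = (j * 2^n) * 2 := by ring
  rw [this]
  omega

lemma measurable_dig (n : ℕ) : MeasurableSet {x : ℝ | dig n x} := by
  have h : Measurable fun x : ℝ => ⌊x * 2^(n+1)⌋ := Int.measurable_floor.comp (by fun_prop)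
  exact h (MeasurableSet.of_discrete (s := {z : ℤ | z % 2 = 1}))

noncomputable section

def DigSet (n : ℕ) : Set ℝ := {x | dig n x}

def Cyl (b : Bool) (F : Finset ℕ) : Set ℝ :=
  Ico (0:ℝ) 1 ∩ ⋂ i ∈ F, (if b then DigSet i else (DigSet i)ᶜ)

lemma mem_Cyl {b : Bool} {F : Finset ℕ} {x : ℝ} :
    x ∈ Cyl b F ↔ x ∈ Ico (0:ℝ) 1 ∧ ∀ i ∈ F, (dig i x ↔ b = true) := by
  simp only [Cyl, mem_inter_iff, mem_iInter]
  refine and_congr_right fun _ => ?_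
  refine forall_congr' fun i => forall_congr' fun hi => ?_
  cases b <;> simp [DigSet]

lemma key_iff {b : Bool} {F : Finset ℕ} {n : ℕ} (hn : ∀ m ∈ F, m < n) (y : ℝ) :
    (y + ((2:ℝ)^(n+1))⁻¹) ∈ Cyl b F ∩ DigSet n ↔ y ∈ Cyl b F ∩ (DigSet n)ᶜ := by
  set c : ℝ := ((2:ℝ)^(n+1))⁻¹ with hc
  have hcpos : 0 < c := by rw [hc]; positivity
  simp only [mem_inter_iff, mem_Cyl, mem_compl_iff, DigSet, mem_setOf_eq, mem_Ico]
  constructor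
  · rintro ⟨⟨⟨hx0, hx1⟩, hF⟩, hd⟩
    have hnd : ¬ dig n y := (dig_add_iff n y).mp hd
    refine ⟨⟨⟨?_, ?_⟩, fun i hi => ((dig_add_lt (hn i hi) hnd).symm).trans (hF i hi)⟩, hnd⟩
    · have := c_le_of_dig hx0 hd
      linarith
    · linarith
  · rintro ⟨⟨⟨hy0, hy1⟩, hF⟩, hnd⟩
    refine ⟨⟨⟨by linarith, add_c_lt_one hy1 hnd⟩,
      fun i hi => (dig_add_lt (hn i hi) hnd).trans (hF i hi)⟩, (dig_add_iff n y).mpr hnd⟩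

lemma measurable_Cyl (b : Bool) (F : Finset ℕ) : MeasurableSet (Cyl b F) := by
  refine measurableSet_Ico.inter (MeasurableSet.biInter F.countable_toSet fun i _ => ?_)
  cases b
  · exact (measurable_dig i).compl
  · exact measurable_dig i

lemma halving_eq {b : Bool} {F : Finset ℕ} {n : ℕ} (hn : ∀ m ∈ F, m < n) :
    volume (Cyl b F ∩ DigSet n) = volume (Cyl b F ∩ (DigSet n)ᶜ) := by
  set c : ℝ := ((2:ℝ)^(n+1))⁻¹ with hc
  have hset : Cyl b F ∩ DigSet n = (fun x => x + (-c)) ⁻¹' (Cyl b F ∩ (DigSet n)ᶜ) := by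
    ext x
    rw [mem_preimage, ← key_iff hn (x + (-c))]
    have : x + -c + c = x := by ring
    rw [this]
  rw [hset, measure_preimage_add_right]

lemma Cyl_insert {b : Bool} {F : Finset ℕ} {n : ℕ} :
    Cyl b (insert n F) = Cyl b F ∩ (if b then DigSet n else (DigSet n)ᶜ) := by
  ext x
  simp only [mem_inter_iff, mem_Cyl, Finset.mem_insert]
  cases b <;> simp only [DigSet, mem_compl_iff, mem_setOf_eq, if_true, if_false] <;>
    constructor
  · rintro ⟨hI, h⟩
    exact ⟨⟨hI, fun i hi => h i (Or.inr hi)⟩, by simpa using h n (Or.inl rfl)⟩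
  · rintro ⟨⟨hI, h⟩, hd⟩
    refine ⟨hI, fun i hi => ?_⟩
    rcases hi with rfl | hi
    · simpa using hd
    · exact h i hi
  · rintro ⟨hI, h⟩
    exact ⟨⟨hI, fun i hi => h i (Or.inr hi)⟩, by simpa using h n (Or.inl rfl)⟩
  · rintro ⟨⟨hI, h⟩, hd⟩
    refine ⟨hI, fun i hi => ?_⟩
    rcases hi with rfl | hi
    · simpa using hd
    · exact h i hi

lemma halving_insert {b : Bool} {F : Finset ℕ} {n : ℕ} (hn : ∀ m ∈ F, m < n) :
    volume (Cyl b (insert n F)) * 2 = volume (Cyl b F) := by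
  have hsplit : volume (Cyl b F ∩ DigSet n) + volume (Cyl b F ∩ (DigSet n)ᶜ)
      = volume (Cyl b F) := by
    rw [← diff_eq]
    exact measure_inter_add_diff _ (measurable_dig n)
  rw [Cyl_insert, mul_two]
  cases b
  · rw [show (if (false : Bool) then DigSet n else (DigSet n)ᶜ) = (DigSet n)ᶜ from rfl,
      ← hsplit, halving_eq hn]
  · rw [show (if (true : Bool) then DigSet n else (DigSet n)ᶜ) = DigSet n from rfl,
      ← hsplit, halving_eq hn]

lemma vol_Cyl_empty (b : Bool) : volume (Cyl b ∅) = 1 := by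
  simp [Cyl, Real.volume_Ico]

lemma exists_cyl (b : Bool) {B : Set ℕ} (hB : B.Infinite) (m : ℕ) (k : ℕ) :
    ∃ F : Finset ℕ, (∀ i ∈ F, i ∈ B ∧ m ≤ i) ∧ volume (Cyl b F) ≤ 2⁻¹ ^ k := by
  induction k with
  | zero => exact ⟨∅, by simp, by rw [vol_Cyl_empty]; simp⟩
  | succ k ih =>
    obtain ⟨F, hF, hvol⟩ := ih
    obtain ⟨n, hnB, hngt⟩ := hB.exists_gt (max (F.sup id) m)
    have hn : ∀ i ∈ F, i < n := fun i hi =>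
      lt_of_le_of_lt ((Finset.le_sup (f := id) hi).trans (le_max_left _ _)) hngt
    refine ⟨insert n F, ?_, ?_⟩
    · intro i hi
      rcases Finset.mem_insert.mp hi with rfl | hi
      · exact ⟨hnB, le_of_lt (lt_of_le_of_lt (le_max_right _ _) hngt)⟩
      · exact hF i hi
    · have heq := halving_insert (b := b) hn
      calc volume (Cyl b (insert n F))
          = volume (Cyl b (insert n F)) * 2 * 2⁻¹ := by
            rw [mul_assoc, ENNReal.mul_inv_cancel two_ne_zero (by norm_num), mul_one]
        _ = volume (Cyl b F) * 2⁻¹ := by rw [heq]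
        _ ≤ 2⁻¹ ^ k * 2⁻¹ := mul_le_mul_left hvol _
        _ = 2⁻¹ ^ (k+1) := (pow_succ _ _).symm

def Eset (b : Bool) (B : Set ℕ) (m : ℕ) : Set ℝ :=
  {x | ∀ n ∈ B, m ≤ n → (dig n x ↔ b = true)}

lemma Eset_inter_null {b : Bool} {B : Set ℕ} (hB : B.Infinite) (m : ℕ) :
    volume (Eset b B m ∩ Ico (0:ℝ) 1) = 0 := by
  have hk : ∀ k : ℕ, volume (Eset b B m ∩ Ico (0:ℝ) 1) ≤ 2⁻¹ ^ k := by
    intro k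
    obtain ⟨F, hF, hvol⟩ := exists_cyl b hB m k
    refine le_trans (measure_mono ?_) hvol
    rintro x ⟨hxE, hxI⟩
    rw [mem_Cyl]
    exact ⟨hxI, fun i hi => hxE i (hF i hi).1 (hF i hi).2⟩
  have h0 : Tendsto (fun k : ℕ => (2⁻¹ : ENNReal) ^ k) atTop (nhds 0) :=
    ENNReal.tendsto_pow_atTop_nhds_zero_of_lt_one (by norm_num)
  exact le_antisymm (ge_of_tendsto' h0 hk) zero_le

lemma Eset_null {b : Bool} {B : Set ℕ} (hB : B.Infinite) (m : ℕ) :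
    volume (Eset b B m) = 0 := by
  have hcov : Eset b B m = ⋃ j : ℤ, Eset b B m ∩ Ico (j:ℝ) (j+1) := by
    ext x
    simp only [mem_iUnion, mem_inter_iff, mem_Ico]
    exact ⟨fun hx => ⟨⌊x⌋, hx, Int.floor_le x, Int.lt_floor_add_one x⟩, fun ⟨j, hx, _⟩ => hx⟩
  rw [hcov]
  refine measure_iUnion_null fun j => ?_
  have hset : Eset b B m ∩ Ico (j:ℝ) (j+1)
      = (fun x => x + (-(j:ℝ))) ⁻¹' (Eset b B m ∩ Ico (0:ℝ) 1) := by
    ext x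
    have hdig : ∀ n, (dig n (x + (-(j:ℝ))) ↔ dig n x) := by
      intro n
      have := dig_int_add n x (-j)
      push_cast at this
      exact this
    simp only [mem_preimage, mem_inter_iff, mem_Ico, Eset, mem_setOf_eq]
    constructor
    · rintro ⟨hE, hj0, hj1⟩
      exact ⟨fun n hn hm => (hdig n).trans (hE n hn hm), by linarith, by linarith⟩
    · rintro ⟨hE, hj0, hj1⟩
      exact ⟨fun n hn hm => (hdig n).symm.trans (hE n hn hm), by linarith, by linarith⟩
  rw [hset, measure_preimage_add_right]
  exact Eset_inter_null hB m

end

lemma bad_null {B : Set ℕ} (hB : B.Infinite) :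
    volume {x : ℝ | ¬ Splits {n | dig n x} B} = 0 := by
  have hsub : {x : ℝ | ¬ Splits {n | dig n x} B} ⊆
      ⋃ p : Bool × ℕ, {x : ℝ | ∀ n ∈ B, p.2 ≤ n → (dig n x ↔ p.1 = true)} := by
    intro x hx
    rw [mem_setOf_eq, Splits, not_and_or, Set.not_infinite, Set.not_infinite] at hx
    simp only [mem_iUnion]
    rcases hx with h | h
    · obtain ⟨m, hm⟩ := h.bddAbove
      refine ⟨(false, m + 1), fun n hn hmn => ?_⟩
      simp only [Bool.false_eq_true, iff_false]
      intro hd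
      have : n ≤ m := hm ⟨hd, hn⟩
      omega
    · obtain ⟨m, hm⟩ := h.bddAbove
      refine ⟨(true, m + 1), fun n hn hmn => ?_⟩
      simp only [iff_true]
      by_contra hd
      have : n ≤ m := hm ⟨hn, hd⟩
      omega
  refine measure_mono_null hsub (measure_iUnion_null fun p => Eset_null hB p.2)

/-- `𝔰 ≤ non(N)`. -/
theorem sNumber_le_nonNull : sNumber ≤ nonNull := by
  have hne : { c | ∃ S : Set ℝ, volume S ≠ 0 ∧ #S = c }.Nonempty :=
    ⟨#(univ : Set ℝ), univ, by simp [Real.volume_univ], rfl⟩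
  obtain ⟨S, hS0, hSc⟩ := csInf_mem hne
  have hsplit : ∀ B : Set ℕ, B.Infinite → ∃ x ∈ S, Splits {n | dig n x} B := by
    intro B hB
    by_contra hcon
    push_neg at hcon
    exact hS0 (measure_mono_null (fun x hx => hcon x hx) (bad_null hB))
  have hmem : sNumber ≤ #{A : Set ℕ | A.Infinite ∧ ∃ x ∈ S, A = {n | dig n x}} := by
    apply csInf_le'
    refine ⟨_, fun A hA => hA.1, fun B hB => ?_, rfl⟩
    obtain ⟨x, hxS, hxsp⟩ := hsplit B hB
    exact ⟨{n | dig n x}, ⟨hxsp.1.mono inter_subset_left, x, hxS, rfl⟩, hxsp⟩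
  refine hmem.trans ?_
  have himg : {A : Set ℕ | A.Infinite ∧ ∃ x ∈ S, A = {n | dig n x}}
      ⊆ (fun x : ℝ => {n | dig n x}) '' S := by
    rintro A ⟨-, x, hxS, rfl⟩
    exact ⟨x, hxS, rfl⟩
  calc #{A : Set ℕ | A.Infinite ∧ ∃ x ∈ S, A = {n | dig n x}}
      ≤ #((fun x : ℝ => {n | dig n x}) '' S) := mk_le_mk_of_subset himg
    _ ≤ #S := mk_image_le
    _ = nonNull := hSc
end

section
/- cov(M) ≤ 𝔯: the covering number of the meager ideal is at most the reaping number. -/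
open Cardinal Set Filter

/-- `cov(M)`: the least cardinality of a family of meager subsets of `ℝ` whose union
covers `ℝ`. -/
noncomputable def covMeager : Cardinal :=
  sInf { c | ∃ F : Set (Set ℝ), (∀ s ∈ F, IsMeagre s) ∧ ⋃₀ F = Set.univ ∧ #F = c }

/-- reals whose binary digits along `B` beyond `m` are constantly `b`. -/
def NSet (B : Set ℕ) (m : ℕ) (b : Bool) : Set ℝ :=
  {x | ∀ n ∈ B, m ≤ n → (Odd ⌊x * 2 ^ n⌋ ↔ b = true)}

lemma nwd (B : Set ℕ) (hB : B.Infinite) (m : ℕ) (b : Bool) :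
    IsNowhereDense (NSet B m b) := by
  rw [IsNowhereDense, eq_empty_iff_forall_notMem]
  intro x hx
  rw [mem_interior_iff_mem_nhds, Metric.mem_nhds_iff] at hx
  obtain ⟨ε, hε, hsub⟩ := hx
  obtain ⟨M, hM⟩ := pow_unbounded_of_one_lt (R := ℝ) (2 / ε) one_lt_two
  have hnb : ¬ BddAbove B := fun hb => hB (Set.finite_iff_bddAbove.2 hb)
  rw [bddAbove_def] at hnb
  push_neg at hnb
  obtain ⟨n, hnB, hn⟩ := hnb (max m M)
  have hmn : m ≤ n := le_of_lt (lt_of_le_of_lt (le_max_left _ _) hn)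
  set t : ℝ := 2 ^ n with ht
  have ht0 : (0:ℝ) < t := by positivity
  have htM : 2 / ε < t := by
    refine lt_of_lt_of_le hM ?_
    exact pow_le_pow_right₀ one_le_two (le_of_lt (lt_of_le_of_lt (le_max_right _ _) hn))
  set k0 : ℤ := ⌈(x - ε) * t⌉ with hk0def
  set k : ℤ := if Odd k0 ↔ b = true then k0 + 1 else k0 with hkdef
  have hkpar : ¬ (Odd k ↔ b = true) := by
    by_cases h : Odd k0 ↔ b = true
    · simp only [hkdef, if_pos h]
      have hpar : Odd (k0 + 1) ↔ ¬ Odd k0 := by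
        rw [Int.odd_iff, Int.odd_iff]; omega
      rw [hpar]; tauto
    · simp only [hkdef, if_neg h]; exact h
  have hk0le : (x - ε) * t ≤ k0 := Int.le_ceil _
  have hk0lt : (k0:ℝ) < (x - ε) * t + 1 := Int.ceil_lt_add_one _
  have hklb : (x - ε) * t ≤ (k:ℝ) := by
    rcases le_or_gt k0 k with h | h
    · exact hk0le.trans (by exact_mod_cast h)
    · exfalso; simp only [hkdef] at h; split_ifs at h <;> omega
  have hkub : (k:ℝ) ≤ (k0:ℝ) + 1 := by
    have : k ≤ k0 + 1 := by simp only [hkdef]; split_ifs <;> omega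
    exact_mod_cast this
  have h2e : 2 / ε * ε < t * ε := mul_lt_mul_of_pos_right htM hε
  have h2e' : (2:ℝ) < t * ε := by
    rwa [div_mul_cancel₀ _ (ne_of_gt hε)] at h2e
  have hup : ((k:ℝ) + 1) / t ≤ x + ε := by
    rw [div_le_iff₀ ht0]
    nlinarith
  have hlo : x - ε ≤ (k:ℝ) / t := by
    rw [le_div_iff₀ ht0]; exact hklb
  set y : ℝ := ((k:ℝ) + 1/2) / t with hy
  have hy1 : (k:ℝ) / t < y := div_lt_div_of_pos_right (by linarith) ht0
  have hy2 : y < ((k:ℝ) + 1) / t := div_lt_div_of_pos_right (by linarith) ht0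
  have hyball : y ∈ Metric.ball x ε := by
    rw [Real.ball_eq_Ioo]
    exact ⟨lt_of_le_of_lt hlo hy1, lt_of_lt_of_le hy2 hup⟩
  have hycl : y ∈ closure (NSet B m b) := hsub hyball
  obtain ⟨z, hzU, hzs⟩ := mem_closure_iff.mp hycl
    (Set.Ioo ((k:ℝ)/t) (((k:ℝ)+1)/t)) isOpen_Ioo ⟨hy1, hy2⟩
  obtain ⟨hzl, hzr⟩ := hzU
  have hz1 : (k:ℝ) < z * t := by rwa [div_lt_iff₀ ht0] at hzl
  have hz2 : z * t < (k:ℝ) + 1 := by rwa [lt_div_iff₀ ht0] at hzr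
  have hfl : ⌊z * t⌋ = k := Int.floor_eq_iff.mpr ⟨hz1.le, by exact_mod_cast hz2⟩
  have := hzs n hnB hmn
  rw [← ht, hfl] at this
  exact hkpar this

lemma meagre_bad (B : Set ℕ) (hB : B.Infinite) :
    IsMeagre {x : ℝ | ¬ Splits {n | Odd ⌊x * 2 ^ n⌋} B} := by
  rw [isMeagre_iff_countable_union_isNowhereDense]
  refine ⟨Set.range (fun p : ℕ × Bool => NSet B p.1 p.2), ?_, Set.countable_range _, ?_⟩
  · rintro t ⟨⟨m, b⟩, rfl⟩
    exact nwd B hB m b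
  · intro x hx
    simp only [Set.mem_setOf_eq, Splits, not_and_or, Set.not_infinite] at hx
    rcases hx with hfin | hfin
    · obtain ⟨m, hm⟩ := hfin.bddAbove
      refine Set.mem_sUnion.2 ⟨NSet B (m+1) false, ⟨⟨m+1, false⟩, rfl⟩, ?_⟩
      intro n hnB hmn
      simp only [Bool.false_eq_true, iff_false]
      intro hodd
      exact absurd (hm ⟨hodd, hnB⟩) (by omega)
    · obtain ⟨m, hm⟩ := hfin.bddAbove
      refine Set.mem_sUnion.2 ⟨NSet B (m+1) true, ⟨⟨m+1, true⟩, rfl⟩, ?_⟩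
      intro n hnB hmn
      simp only [iff_true]
      by_contra hodd
      exact absurd (hm ⟨hnB, hodd⟩) (by omega)

/-- `cov(M) ≤ 𝔯`. -/
theorem covMeager_le_rNumber : covMeager ≤ rNumber := by
  refine le_csInf ?_ ?_
  · -- the defining set of rNumber is nonempty
    refine ⟨#{B : Set ℕ | B.Infinite}, {B | B.Infinite}, fun B hB => hB, ?_, rfl⟩
    rintro ⟨A, hA, hAsp⟩
    have := (hAsp A hA).2
    simp [Set.diff_self] at this
  · rintro c ⟨R, hRinf, hRreap, rfl⟩
    -- R is nonempty
    have hRne : R.Nonempty := by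
      rcases Set.eq_empty_or_nonempty R with h | h
      · exfalso
        exact hRreap ⟨Set.univ, Set.infinite_univ, by simp [h]⟩
      · exact h
    push_neg at hRreap
    set F : Set (Set ℝ) := (fun B => {x : ℝ | ¬ Splits {n | Odd ⌊x * 2 ^ n⌋} B}) '' R with hF
    have hmeag : ∀ s ∈ F, IsMeagre s := by
      rintro s ⟨B, hB, rfl⟩
      exact meagre_bad B (hRinf B hB)
    have hcov : ⋃₀ F = Set.univ := by
      rw [Set.eq_univ_iff_forall]
      intro x
      by_cases hAx : Set.Infinite {n | Odd ⌊x * 2 ^ n⌋}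
      · obtain ⟨B, hBR, hBns⟩ := hRreap _ hAx
        exact ⟨_, ⟨B, hBR, rfl⟩, hBns⟩
      · obtain ⟨B, hBR⟩ := hRne
        refine ⟨_, ⟨B, hBR, rfl⟩, ?_⟩
        simp only [Set.mem_setOf_eq, Splits, not_and_or, Set.not_infinite]
        left
        exact (Set.not_infinite.mp hAx).subset Set.inter_subset_left
    calc covMeager ≤ #F := csInf_le (OrderBot.bddBelow _) ⟨F, hmeag, hcov, rfl⟩
      _ ≤ #R := Cardinal.mk_image_le
end

section
/- cov(N) ≤ 𝔯: the covering number of the null ideal is at most the reaping number. -/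
open Cardinal Set Filter MeasureTheory Pointwise

/-- `cov(N)`: the least cardinality of a family of Lebesgue-null subsets of `ℝ` whose
union covers `ℝ`. -/
noncomputable def covNull : Cardinal :=
  sInf { c | ∃ F : Set (Set ℝ), (∀ s ∈ F, volume s = 0) ∧ ⋃₀ F = Set.univ ∧ #F = c }

namespace CovR
attribute [local instance] Classical.propDecidable

def dig (n : ℕ) (x : ℝ) : Prop := Odd ⌊x * 2^(n+1)⌋

lemma dig_succ (n : ℕ) (z : ℝ) (b : ℤ) : dig (n+1) ((z + b)/2) ↔ dig n z := by
  unfold dig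
  have h : (z + b)/2 * 2^(n+1+1) = z * 2^(n+1) + (b * 2^(n+1) : ℤ) := by
    push_cast; ring
  rw [h, Int.floor_add_intCast]
  simp [Int.odd_add, parity_simps]

lemma dig_zero (z : ℝ) (hz : z ∈ Ico (0:ℝ) 1) (b : ℤ) : dig 0 ((z + b)/2) ↔ Odd b := by
  unfold dig
  have h : (z + b)/2 * 2^(0+1) = z + b := by ring
  rw [h, Int.floor_add_intCast, Int.floor_eq_zero_iff.2 hz]
  simp

lemma vol_half_image (c : ℝ) (s : Set ℝ) :
    volume ((fun z => (z + c)/2) '' s) = 2⁻¹ * volume s := by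
  have h : (fun z : ℝ => (z + c)/2) '' s = (c/2) +ᵥ ((2⁻¹ : ℝ) • s) := by
    ext y
    simp only [Set.mem_vadd_set, Set.mem_smul_set, Set.mem_image]
    constructor
    · rintro ⟨z, hz, rfl⟩; exact ⟨2⁻¹ * z, ⟨z, hz, rfl⟩, by simp only [vadd_eq_add]; ring⟩
    · rintro ⟨_, ⟨z, hz, rfl⟩, rfl⟩; exact ⟨z, hz, by simp only [vadd_eq_add, smul_eq_mul]; ring⟩
  rw [h, measure_vadd, Measure.addHaar_smul_of_nonneg volume (by norm_num) s]
  rw [Module.finrank_self, pow_one, ENNReal.ofReal_inv_of_pos two_pos, ENNReal.ofReal_ofNat]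

def E (s : Finset ℕ) (ε : ℕ → Prop) : Set ℝ :=
  {y | y ∈ Ico (0:ℝ) 1 ∧ ∀ n ∈ s, (dig n y ↔ ε n)}

lemma decomp {y : ℝ} (hy : y ∈ Ico (0:ℝ) 1) :
    ∃ z ∈ Ico (0:ℝ) 1, ∃ b : ℤ, (b = 0 ∨ b = 1) ∧ y = (z + b)/2 := by
  refine ⟨Int.fract (2*y), ⟨Int.fract_nonneg _, Int.fract_lt_one _⟩, ⌊2*y⌋, ?_, ?_⟩
  · have h1 : (0:ℤ) ≤ ⌊2*y⌋ := Int.floor_nonneg.2 (by linarith [hy.1])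
    have h2 : ⌊2*y⌋ < 2 := Int.floor_lt.2 (by push_cast; linarith [hy.2])
    omega
  · unfold Int.fract; push_cast; ring

lemma mem_shift {s : Finset ℕ} (hs : 0 ∉ s) {m : ℕ} : m ∈ s.image (· - 1) ↔ m + 1 ∈ s := by
  simp only [Finset.mem_image]
  constructor
  · rintro ⟨n, hn, rfl⟩
    have : n ≠ 0 := fun h => hs (h ▸ hn)
    have : n - 1 + 1 = n := by omega
    rwa [this]
  · intro h; exact ⟨m + 1, h, by omega⟩

lemma E_eq_of_notMem (s : Finset ℕ) (hs : 0 ∉ s) (ε : ℕ → Prop) :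
    E s ε = (fun z => (z + ((0:ℤ):ℝ))/2) '' E (s.image (· - 1)) (fun n => ε (n+1)) ∪
            (fun z => (z + ((1:ℤ):ℝ))/2) '' E (s.image (· - 1)) (fun n => ε (n+1)) := by
  ext y
  constructor
  · rintro ⟨hy, hd⟩
    obtain ⟨z, hz, b, hb, rfl⟩ := decomp hy
    have hzE : z ∈ E (s.image (· - 1)) (fun n => ε (n+1)) := by
      refine ⟨hz, fun m hm => ?_⟩
      have := hd (m+1) ((mem_shift hs).1 hm)
      rwa [dig_succ] at this
    rcases hb with rfl | rfl
    · exact Or.inl ⟨z, hzE, rfl⟩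
    · exact Or.inr ⟨z, hzE, rfl⟩
  · rintro (⟨z, ⟨hz, hd⟩, rfl⟩ | ⟨z, ⟨hz, hd⟩, rfl⟩) <;>
    · refine ⟨⟨by push_cast; linarith [hz.1, hz.2], by push_cast; linarith [hz.1, hz.2]⟩,
        fun n hn => ?_⟩
      obtain ⟨m, rfl⟩ : ∃ m, n = m + 1 := by
        have : n ≠ 0 := fun h => hs (h ▸ hn)
        exact ⟨n - 1, by omega⟩
      rw [dig_succ]
      exact hd m ((mem_shift hs).2 hn)

lemma E_eq_of_mem (s : Finset ℕ) (hs : 0 ∈ s) (ε : ℕ → Prop) :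
    E s ε = (fun z => (z + (((if ε 0 then 1 else 0 : ℤ)):ℝ))/2) ''
      E ((s.erase 0).image (· - 1)) (fun n => ε (n+1)) := by
  have hs0 : 0 ∉ s.erase 0 := Finset.notMem_erase 0 s
  have hshift : ∀ m : ℕ, m ∈ (s.erase 0).image (· - 1) ↔ m + 1 ∈ s := by
    intro m
    rw [mem_shift hs0, Finset.mem_erase]
    simp
  ext y
  constructor
  · rintro ⟨hy, hd⟩
    obtain ⟨z, hz, b, hb, rfl⟩ := decomp hy
    have hzE : z ∈ E ((s.erase 0).image (· - 1)) (fun n => ε (n+1)) := by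
      refine ⟨hz, fun m hm => ?_⟩
      have := hd (m+1) ((hshift m).1 hm)
      rwa [dig_succ] at this
    have h0 := hd 0 hs
    rw [dig_zero z hz b] at h0
    have hb' : b = if ε 0 then 1 else 0 := by
      by_cases hε : ε 0 <;> simp only [hε, if_true, if_false] <;> rcases hb with rfl | rfl <;>
        simp_all [Int.odd_iff]
    exact ⟨z, hzE, by rw [hb']⟩
  · rintro ⟨z, ⟨hz, hd⟩, rfl⟩
    have hc : (0:ℝ) ≤ ((if ε 0 then 1 else 0 : ℤ):ℝ) ∧ ((if ε 0 then 1 else 0 : ℤ):ℝ) ≤ 1 := by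
      by_cases hε : ε 0 <;> simp [hε]
    refine ⟨⟨by linarith [hz.1, hc.1], by linarith [hz.2, hc.2]⟩, fun n hn => ?_⟩
    rcases Nat.eq_zero_or_pos n with rfl | hpos
    · rw [dig_zero z hz]
      by_cases hε : ε 0 <;> simp [hε, Int.odd_iff]
    · obtain ⟨m, rfl⟩ : ∃ m, n = m + 1 := ⟨n - 1, by omega⟩
      rw [dig_succ]
      exact hd m ((hshift m).2 hn)

lemma vol_E_le : ∀ (N : ℕ) (s : Finset ℕ), (∀ n ∈ s, n < N) → ∀ ε : ℕ → Prop,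
    volume (E s ε) ≤ 2⁻¹ ^ s.card := by
  intro N
  induction N with
  | zero =>
    intro s hs ε
    have hse : s = ∅ := Finset.eq_empty_of_forall_notMem (fun n hn => Nat.not_lt_zero n (hs n hn))
    subst hse
    have hE : E ∅ ε = Ico (0:ℝ) 1 := by ext y; simp [E]
    rw [hE, Real.volume_Ico]
    norm_num
  | succ N ih =>
    intro s hs ε
    by_cases h0 : 0 ∈ s
    · rw [E_eq_of_mem s h0 ε, vol_half_image]
      set s' := (s.erase 0).image (· - 1) with hs'
      have hmem : ∀ m : ℕ, m ∈ s' ↔ m + 1 ∈ s := by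
        intro m
        rw [hs', mem_shift (Finset.notMem_erase 0 s), Finset.mem_erase]
        simp
      have hb : ∀ n ∈ s', n < N := fun n hn =>
        Nat.lt_of_succ_lt_succ (hs (n+1) ((hmem n).1 hn))
      have hcard : s'.card = s.card - 1 := by
        rw [hs', Finset.card_image_of_injOn, Finset.card_erase_of_mem h0]
        intro a ha b hb hab
        have ha0 : a ≠ 0 := (Finset.mem_erase.1 (Finset.mem_coe.1 ha)).1
        have hb0 : b ≠ 0 := (Finset.mem_erase.1 (Finset.mem_coe.1 hb)).1
        simp only at hab
        omega
      obtain ⟨k, hk⟩ : ∃ k, s.card = k + 1 :=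
        ⟨s.card - 1, (Nat.succ_pred_eq_of_pos (Finset.card_pos.2 ⟨0, h0⟩)).symm⟩
      have hcard' : s'.card = k := by omega
      calc 2⁻¹ * volume (E s' (fun n => ε (n+1)))
          ≤ 2⁻¹ * 2⁻¹ ^ s'.card := mul_le_mul_right (ih s' hb _) _
        _ = 2⁻¹ ^ s.card := by rw [hcard', hk, pow_succ]; ring
    · rw [E_eq_of_notMem s h0 ε]
      refine (measure_union_le _ _).trans ?_
      rw [vol_half_image, vol_half_image]
      set s' := s.image (· - 1) with hs'
      have hb : ∀ n ∈ s', n < N := fun n hn =>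
        Nat.lt_of_succ_lt_succ (hs (n+1) ((mem_shift h0).1 hn))
      have hcard : s'.card = s.card := by
        rw [hs', Finset.card_image_of_injOn]
        intro a ha b hb hab
        have ha0 : a ≠ 0 := fun h => h0 (h ▸ Finset.mem_coe.1 ha)
        have hb0 : b ≠ 0 := fun h => h0 (h ▸ Finset.mem_coe.1 hb)
        simp only at hab
        omega
      have hv : volume (E s' (fun n => ε (n+1))) ≤ 2⁻¹ ^ s.card := hcard ▸ ih s' hb _
      calc 2⁻¹ * volume (E s' (fun n => ε (n+1))) + 2⁻¹ * volume (E s' (fun n => ε (n+1)))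
          ≤ 2⁻¹ * 2⁻¹ ^ s.card + 2⁻¹ * 2⁻¹ ^ s.card :=
            add_le_add (mul_le_mul_right hv _) (mul_le_mul_right hv _)
        _ = (2⁻¹ + 2⁻¹) * 2⁻¹ ^ s.card := by ring
        _ = 2⁻¹ ^ s.card := by
            have h2 : (2⁻¹ : ENNReal) + 2⁻¹ = 1 := by
              rw [← two_mul, ENNReal.mul_inv_cancel] <;> norm_num
            rw [h2, one_mul]

lemma vol_E_le' (s : Finset ℕ) (ε : ℕ → Prop) : volume (E s ε) ≤ 2⁻¹ ^ s.card :=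
  vol_E_le (s.sup id + 1) s
    (fun n hn => Nat.lt_succ_of_le (Finset.le_sup (f := id) hn)) ε

lemma vol_tail_zero (B : Set ℕ) (hB : B.Infinite) (ε : Prop) :
    volume {y | y ∈ Ico (0:ℝ) 1 ∧ ∀ n ∈ B, (dig n y ↔ ε)} = 0 := by
  by_contra h
  obtain ⟨k, hk⟩ := ENNReal.exists_inv_two_pow_lt h
  obtain ⟨t, htB, htc⟩ := hB.exists_subset_card_eq k
  have hsub : {y | y ∈ Ico (0:ℝ) 1 ∧ ∀ n ∈ B, (dig n y ↔ ε)} ⊆ E t (fun _ => ε) := by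
    rintro y ⟨hy, hd⟩
    exact ⟨hy, fun n hn => hd n (htB hn)⟩
  have := (measure_mono hsub).trans (vol_E_le' t (fun _ => ε))
  rw [htc] at this
  exact absurd this (not_le.2 hk)

lemma vol_tail_frac (B : Set ℕ) (hB : B.Infinite) (ε : Prop) :
    volume {x : ℝ | ∀ n ∈ B, (dig n (Int.fract x) ↔ ε)} = 0 := by
  have hsub : {x : ℝ | ∀ n ∈ B, (dig n (Int.fract x) ↔ ε)} ⊆
      ⋃ k : ℤ, ((k:ℝ) +ᵥ {y | y ∈ Ico (0:ℝ) 1 ∧ ∀ n ∈ B, (dig n y ↔ ε)}) := by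
    intro x hx
    refine mem_iUnion.2 ⟨⌊x⌋, ?_⟩
    refine ⟨Int.fract x, ⟨⟨Int.fract_nonneg x, Int.fract_lt_one x⟩, hx⟩, ?_⟩
    simp only [vadd_eq_add]
    unfold Int.fract
    ring
  refine measure_mono_null hsub (measure_iUnion_null fun k => ?_)
  rw [measure_vadd]
  exact vol_tail_zero B hB ε

def Aset (x : ℝ) : Set ℕ := {n | dig n (Int.fract x)}

lemma vol_notSplits (B : Set ℕ) (hB : B.Infinite) :
    volume {x : ℝ | ¬ Splits (Aset x) B} = 0 := by
  have hsub : {x : ℝ | ¬ Splits (Aset x) B} ⊆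
      ⋃ m : ℕ, ({x : ℝ | ∀ n ∈ {n | n ∈ B ∧ m < n}, (dig n (Int.fract x) ↔ False)} ∪
                {x : ℝ | ∀ n ∈ {n | n ∈ B ∧ m < n}, (dig n (Int.fract x) ↔ True)}) := by
    intro x hx
    unfold Splits at hx
    rw [Set.mem_setOf_eq, not_and_or] at hx
    rcases hx with hx | hx
    · rw [Set.not_infinite] at hx
      obtain ⟨m, hm⟩ := hx.bddAbove
      refine mem_iUnion.2 ⟨m, Or.inl fun n hn => ?_⟩
      simp only [iff_false]
      intro hd
      exact absurd (hm ⟨hd, hn.1⟩) (not_le.2 hn.2)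
    · rw [Set.not_infinite] at hx
      obtain ⟨m, hm⟩ := hx.bddAbove
      refine mem_iUnion.2 ⟨m, Or.inr fun n hn => ?_⟩
      simp only [iff_true]
      by_contra hd
      exact absurd (hm ⟨hn.1, hd⟩) (not_le.2 hn.2)
  refine measure_mono_null hsub (measure_iUnion_null fun m => measure_union_null ?_ ?_) <;>
  · refine vol_tail_frac _ ?_ _
    have : {n | n ∈ B ∧ m < n} = B \ {n | n ≤ m} := by
      ext n; simp [not_le]
    rw [this]
    exact hB.diff (Set.finite_le_nat m)

end CovR

/-- `cov(N) ≤ 𝔯`. -/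
theorem covNull_le_rNumber : covNull ≤ rNumber := by
  have hS : {c | ∃ R : Set (Set ℕ), (∀ B ∈ R, B.Infinite) ∧
      (¬ ∃ A : Set ℕ, A.Infinite ∧ ∀ B ∈ R, Splits A B) ∧ #R = c}.Nonempty := by
    refine ⟨_, {B : Set ℕ | B.Infinite}, fun B hB => hB, ?_, rfl⟩
    rintro ⟨A, hA, h⟩
    have h2 := (h A hA).2
    rw [Set.diff_self] at h2
    exact Set.not_infinite.2 Set.finite_empty h2
  obtain ⟨R, hRinf, hRsplit, hRcard⟩ := csInf_mem hS
  push_neg at hRsplit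
  obtain ⟨B₀, hB₀R, -⟩ := hRsplit Set.univ Set.infinite_univ
  set F : Set (Set ℝ) := (fun B => {x : ℝ | ¬ Splits (CovR.Aset x) B}) '' R with hF
  have h1 : ∀ s ∈ F, volume s = 0 := by
    rintro s ⟨B, hBR, rfl⟩
    exact CovR.vol_notSplits B (hRinf B hBR)
  have h2 : ⋃₀ F = Set.univ := by
    rw [Set.eq_univ_iff_forall]
    intro x
    by_cases h : (CovR.Aset x).Infinite
    · obtain ⟨B, hBR, hns⟩ := hRsplit _ h
      exact ⟨_, ⟨B, hBR, rfl⟩, hns⟩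
    · refine ⟨_, ⟨B₀, hB₀R, rfl⟩, ?_⟩
      exact fun hsp => h (hsp.1.mono Set.inter_subset_left)
  have hc : covNull ≤ #F := csInf_le' ⟨F, h1, h2, rfl⟩
  calc covNull ≤ #F := hc
    _ ≤ #R := Cardinal.mk_image_le
    _ = rNumber := hRcard
end

section
/- 𝔟_▷ = max{𝔟, 𝔰} and 𝔡_▷ = min{𝔡, 𝔯}: the finitely splitting number 𝔣𝔰 = 𝔟_▷ equals max{𝔟, 𝔰}, and the finitely reaping number 𝔣𝔯 = 𝔡_▷ equals min{𝔡, 𝔯}. -/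
open Cardinal Set Filter

/-- `J` is an interval partition of `ℕ`: a sequence of non-empty finite intervals
partitioning `ℕ` with `max (J n) < min (J (n+1))` for all `n`. -/
def IsIntervalPartition (J : ℕ → Set ℕ) : Prop :=
  (∀ n, (J n).Finite) ∧ (∀ n, (J n).Nonempty) ∧
  (∀ n, ∀ x ∈ J n, ∀ z ∈ J n, ∀ y : ℕ, x ≤ y → y ≤ z → y ∈ J n) ∧
  (⋃ n, J n) = Set.univ ∧ (Set.univ : Set ℕ).PairwiseDisjoint J ∧
  (∀ n, ∀ x ∈ J n, ∀ y ∈ J (n + 1), x < y)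

/-- `a` splits the interval partition `J̄`: `J k ⊆ a` for infinitely many `k` and
`J k ⊆ ℕ \ a` for infinitely many `k`. -/
def SplitsIP (a : Set ℕ) (J : ℕ → Set ℕ) : Prop :=
  { k : ℕ | J k ⊆ a }.Infinite ∧ { k : ℕ | J k ⊆ aᶜ }.Infinite

/-- The finitely splitting number `𝔣𝔰 = 𝔟_▷`: the least cardinality of a family `A` of
infinite subsets of `ℕ` such that every interval partition of `ℕ` is split by some
`a ∈ A`. -/
noncomputable def fsNumber : Cardinal :=
  sInf { c | ∃ A : Set (Set ℕ), (∀ a ∈ A, a.Infinite) ∧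
    (∀ J : ℕ → Set ℕ, IsIntervalPartition J → ∃ a ∈ A, SplitsIP a J) ∧ #A = c }

/-- The finitely reaping number `𝔣𝔯 = 𝔡_▷`: the least cardinality of a family `D` of
interval partitions of `ℕ` such that no single infinite `a ⊆ ℕ` splits every member
of `D`. -/
noncomputable def frNumber : Cardinal :=
  sInf { c | ∃ D : Set (ℕ → Set ℕ), (∀ J ∈ D, IsIntervalPartition J) ∧
    (¬ ∃ a : Set ℕ, a.Infinite ∧ ∀ J ∈ D, SplitsIP a J) ∧ #D = c }

namespace FSAux

lemma infinite_of_forall_ge {p : ℕ → Prop} (h : ∀ N, ∃ n, N ≤ n ∧ p n) :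
    {n | p n}.Infinite := by
  intro hfin
  obtain ⟨m, hm⟩ := hfin.bddAbove
  obtain ⟨n, hn, hp⟩ := h (m + 1)
  exact absurd (hm hp) (by omega)

lemma exists_ge_of_infinite {p : ℕ → Prop} (h : {n | p n}.Infinite) (N : ℕ) :
    ∃ n, N ≤ n ∧ p n := by
  obtain ⟨n, hn, hN⟩ := h.exists_gt N
  exact ⟨n, hN.le, hn⟩

lemma not_domLT_infinite {f g : ℕ → ℕ} (h : ¬ DomLT f g) : {n | g n ≤ f n}.Infinite := by
  rw [DomLT, Filter.not_eventually] at h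
  apply infinite_of_forall_ge
  intro N
  obtain ⟨n, hn, hp⟩ := Filter.frequently_atTop.mp h N
  exact ⟨n, hn, not_lt.mp hp⟩

/-- strictly monotone majorant -/
def majSM (f : ℕ → ℕ) : ℕ → ℕ
  | 0 => f 0 + 1
  | n + 1 => max (f (n + 1)) (majSM f n) + 1

lemma majSM_strictMono (f : ℕ → ℕ) : StrictMono (majSM f) := by
  apply strictMono_nat_of_lt_succ
  intro n
  simp [majSM]

lemma le_majSM (f : ℕ → ℕ) : ∀ n, f n ≤ majSM f n := by
  intro n; cases n with
  | zero => simp [majSM]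
  | succ n => simp [majSM]; omega

lemma lt_majSM (f : ℕ → ℕ) : ∀ n, n < majSM f n := by
  intro n; induction n with
  | zero => simp [majSM]
  | succ n ih => simp [majSM]; omega

/-- iterates of h starting at 0 -/
def its (h : ℕ → ℕ) : ℕ → ℕ
  | 0 => 0
  | j + 1 => h (its h j)

/-- interval partition determined by h -/
def ipOf (h : ℕ → ℕ) (j : ℕ) : Set ℕ := Set.Ico (its h j) (its h (j + 1))

section ipOf
variable {h : ℕ → ℕ} (hid : ∀ n, n < h n)
include hid

lemma its_strictMono : StrictMono (its h) := by
  apply strictMono_nat_of_lt_succ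
  intro n; exact hid _

lemma its_lt_succ (j : ℕ) : its h j < its h (j + 1) := hid _

lemma le_its (j : ℕ) : j ≤ its h j := by
  induction j with
  | zero => simp [its]
  | succ j ih => simp only [its]; have := hid (its h j); omega

lemma exists_idx (m : ℕ) : ∃ j, its h j ≤ m ∧ m < its h (j + 1) := by
  induction m with
  | zero => exact ⟨0, by simp [its], by simpa [its] using hid 0⟩
  | succ m ih =>
    obtain ⟨j, h1, h2⟩ := ih
    by_cases hc : m + 1 < its h (j + 1)
    · exact ⟨j, by omega, hc⟩
    · exact ⟨j + 1, by omega, by have := its_lt_succ hid (j + 1); omega⟩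

lemma ipOf_isIP : IsIntervalPartition (ipOf h) := by
  refine ⟨fun n => Set.finite_Ico _ _, fun n => ?_, ?_, ?_, ?_, ?_⟩
  · exact Set.nonempty_Ico.mpr (its_lt_succ hid n)
  · rintro n x ⟨hx1, hx2⟩ z ⟨hz1, hz2⟩ y hxy hyz
    exact ⟨le_trans hx1 hxy, lt_of_le_of_lt hyz hz2⟩
  · ext m
    simp only [Set.mem_iUnion, Set.mem_univ, iff_true]
    obtain ⟨j, h1, h2⟩ := exists_idx hid m
    exact ⟨j, h1, h2⟩
  · intro j _ k _ hjk
    rw [Function.onFun, Set.disjoint_left]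
    rintro x ⟨hx1, hx2⟩ ⟨hy1, hy2⟩
    rcases lt_or_gt_of_ne hjk with hlt | hlt
    · have : its h (j + 1) ≤ its h k := (its_strictMono hid).monotone (by omega)
      omega
    · have : its h (k + 1) ≤ its h j := (its_strictMono hid).monotone (by omega)
      omega
  · rintro n x ⟨hx1, hx2⟩ y ⟨hy1, hy2⟩
    exact lt_of_lt_of_le hx2 hy1

lemma mem_ipOf_self (j : ℕ) : its h j ∈ ipOf h j := ⟨le_refl _, its_lt_succ hid j⟩

end ipOf

end FSAux
namespace FSAux

section IP
variable {J : ℕ → Set ℕ}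

lemma cross_lt (hJ : IsIntervalPartition J) :
    ∀ {l k x y}, k < l → x ∈ J k → y ∈ J l → x < y := by
  obtain ⟨-, hne, -, -, -, hord⟩ := hJ
  intro l
  induction l with
  | zero => omega
  | succ l ih =>
    intro k x y hkl hx hy
    rcases Nat.lt_or_ge k l with h' | h'
    · obtain ⟨z, hz⟩ := hne l
      exact lt_trans (ih h' hx hz) (hord l z hz y hy)
    · have : k = l := by omega
      subst this
      exact hord k x hx y hy

lemma memJ_ge (hJ : IsIntervalPartition J) : ∀ {k x}, x ∈ J k → k ≤ x := by
  intro k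
  induction k with
  | zero => omega
  | succ k ih =>
    intro x hx
    obtain ⟨z, hz⟩ := hJ.2.1 k
    have h1 := ih hz
    have h2 := cross_lt hJ (Nat.lt_succ_self k) hz hx
    omega

open Classical in
/-- index of the block containing n -/
noncomputable def idxJ (J : ℕ → Set ℕ) (n : ℕ) : ℕ :=
  if h : ∃ k, n ∈ J k then h.choose else 0

lemma mem_idxJ (hJ : IsIntervalPartition J) (n : ℕ) : n ∈ J (idxJ J n) := by
  have hcov := hJ.2.2.2.1
  have h : ∃ k, n ∈ J k := by
    have : n ∈ ⋃ k, J k := by rw [hcov]; trivial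
    exact Set.mem_iUnion.mp this
  rw [idxJ]
  rw [dif_pos h]
  exact h.choose_spec

/-- end (+1) of the block following the block of n -/
noncomputable def GJ (J : ℕ → Set ℕ) (n : ℕ) : ℕ := sSup (J (idxJ J n + 1)) + 1

lemma sSup_memJ (hJ : IsIntervalPartition J) (k : ℕ) : sSup (J k) ∈ J k :=
  Nat.sSup_mem (hJ.2.1 k) (hJ.1 k).bddAbove

lemma block_subset_GJ (hJ : IsIntervalPartition J) (n : ℕ) :
    J (idxJ J n + 1) ⊆ Set.Ico n (GJ J n) := by
  intro y hy
  constructor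
  · exact (cross_lt hJ (Nat.lt_succ_self _) (mem_idxJ hJ n) hy).le
  · have := le_csSup (hJ.1 _).bddAbove hy
    rw [GJ]; omega

lemma lt_GJ (hJ : IsIntervalPartition J) (n : ℕ) : n < GJ J n := by
  have h := block_subset_GJ hJ n (sSup_memJ hJ (idxJ J n + 1))
  exact lt_of_le_of_lt h.1 (by rw [GJ]; exact Nat.lt_succ_of_le (le_refl _))

/-- if infinitely many blocks of a disjoint family of nonempty sets sit inside X,
then X is infinite -/
lemma lemC (hd : (Set.univ : Set ℕ).PairwiseDisjoint J) (hne : ∀ k, (J k).Nonempty)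
    {X : Set ℕ} (h : {k | J k ⊆ X}.Infinite) : X.Infinite := by
  set φ : ℕ → ℕ := fun k => (hne k).some with hφ
  have hmem : ∀ k, φ k ∈ J k := fun k => (hne k).some_mem
  have hinj : Function.Injective φ := by
    intro k l hkl
    by_contra hne'
    have hd' := hd (Set.mem_univ k) (Set.mem_univ l) hne'
    exact Set.disjoint_left.mp hd' (hmem k) (hkl ▸ hmem l)
  have : φ '' {k | J k ⊆ X} ⊆ X := by
    rintro x ⟨k, hk, rfl⟩
    exact hk (hmem k)
  exact Set.Infinite.mono this (h.image hinj.injOn)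

end IP
end FSAux
namespace FSAux

section Main
variable {J : ℕ → Set ℕ} {f : ℕ → ℕ}

/-- Lemma A: if f is monotone, above id, and infinitely often above GJ∘GJ,
then infinitely many intervals of ipOf f contain a complete block of J. -/
lemma lemA (hJ : IsIntervalPartition J) (hmono : Monotone f) (hid : ∀ n, n < f n)
    (hinf : {n | GJ J (GJ J n) ≤ f n}.Infinite) :
    {j | ∃ k, J k ⊆ ipOf f j}.Infinite := by
  apply infinite_of_forall_ge
  intro M
  obtain ⟨n, hn, hfn⟩ := exists_ge_of_infinite hinf (its f (M + 1))
  obtain ⟨j, hj1, hj2⟩ := exists_idx hid n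
  have hjM : M < j := by
    have := (its_strictMono hid).lt_iff_lt (a := M + 1) (b := j + 1)
    omega
  have hsub1 := block_subset_GJ hJ n
  have hsub2 := block_subset_GJ hJ (GJ J n)
  have hfc : f n ≤ its f (j + 2) := by
    have : f n ≤ f (its f (j + 1)) := hmono (by omega)
    simpa [its] using this
  by_cases hc : sSup (J (idxJ J n + 1)) < its f (j + 1)
  · refine ⟨j, by omega, idxJ J n + 1, ?_⟩
    intro x hx
    have h1 := (hsub1 hx).1
    have h2 := le_csSup (hJ.1 _).bddAbove hx
    exact ⟨by omega, by omega⟩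
  · refine ⟨j + 1, by omega, idxJ J (GJ J n) + 1, ?_⟩
    push_neg at hc
    have hsup := (hsub1 (sSup_memJ hJ (idxJ J n + 1))).2
    intro x hx
    obtain ⟨h1, h2⟩ := hsub2 hx
    constructor
    · omega
    · show x < its f (j + 2)
      omega

/-- Lemma B: from a set s splitting the set of good interval indices,
the union of the s-intervals splits J. -/
lemma lemB (hJ : IsIntervalPartition J) (hid : ∀ n, n < f n)
    {s : Set ℕ} (h1 : (s ∩ {j | ∃ k, J k ⊆ ipOf f j}).Infinite)
    (h2 : ({j | ∃ k, J k ⊆ ipOf f j} \ s).Infinite) :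
    SplitsIP (⋃ j ∈ s, ipOf f j) J := by
  set a := ⋃ j ∈ s, ipOf f j with ha
  have key : ∀ (T : Set ℕ), (T ∩ {j | ∃ k, J k ⊆ ipOf f j}).Infinite →
      ∀ M, ∃ k, M ≤ k ∧ ∃ j ∈ T, J k ⊆ ipOf f j := by
    intro T hT M
    obtain ⟨j, hj1, hj2, k, hk⟩ := exists_ge_of_infinite
      (hT.mono (fun x hx => hx) : (T ∩ {j | ∃ k, J k ⊆ ipOf f j}).Infinite) (sSup (J M) + 1)
    refine ⟨k, ?_, j, hj2, hk⟩
    by_contra hkM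
    push_neg at hkM
    obtain ⟨x, hx⟩ := hJ.2.1 k
    have hxj : x ∈ ipOf f j := hk hx
    have : its f j ≤ x := hxj.1
    have hjx : j ≤ its f j := le_its hid j
    have : sSup (J M) < x := by omega
    have : x < sSup (J M) := cross_lt hJ hkM hx (sSup_memJ hJ M)
    omega
  constructor
  · apply infinite_of_forall_ge
    intro M
    obtain ⟨k, hkM, j, hjs, hk⟩ := key s (by convert h1 using 2) M
    refine ⟨k, hkM, hk.trans ?_⟩
    exact Set.subset_iUnion₂ (s := fun j (_ : j ∈ s) => ipOf f j) j hjs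
  · apply infinite_of_forall_ge
    intro M
    have h2' : (sᶜ ∩ {j | ∃ k, J k ⊆ ipOf f j}).Infinite := by
      apply h2.mono; intro x hx; exact ⟨hx.2, hx.1⟩
    obtain ⟨k, hkM, j, hjs, hk⟩ := key sᶜ h2' M
    refine ⟨k, hkM, hk.trans ?_⟩
    intro x hx
    simp only [ha, Set.mem_compl_iff, Set.mem_iUnion]
    rintro ⟨j', hj', hx'⟩
    have hne : j ≠ j' := fun h => hjs (h ▸ hj')
    have hdisj := (ipOf_isIP hid).2.2.2.2.1 (Set.mem_univ j) (Set.mem_univ j') hne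
    exact Set.disjoint_left.mp hdisj hx hx'

end Main
end FSAux
namespace FSAux

/-- next element of B strictly above n, plus one -/
noncomputable def nxtF (B : Set ℕ) : ℕ → ℕ := fun n => sInf {m | m ∈ B ∧ n < m} + 1

section nxt
variable {B : Set ℕ} (hB : B.Infinite)
include hB

lemma nxt_spec (n : ℕ) : sInf {m | m ∈ B ∧ n < m} ∈ B ∧ n < sInf {m | m ∈ B ∧ n < m} := by
  have hne : {m | m ∈ B ∧ n < m}.Nonempty := by
    obtain ⟨m, hm1, hm2⟩ := (hB : {m | m ∈ B}.Infinite).exists_gt n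
    exact ⟨m, hm1, hm2⟩
  exact Nat.sInf_mem hne

lemma nxtF_gt (n : ℕ) : n < nxtF B n := by
  have := (nxt_spec hB n).2; rw [nxtF]; omega

lemma ipOf_nxtF_meets (j : ℕ) : (ipOf (nxtF B) j ∩ B).Nonempty := by
  refine ⟨sInf {m | m ∈ B ∧ its (nxtF B) j < m}, ⟨?_, ?_⟩, (nxt_spec hB _).1⟩
  · exact (nxt_spec hB _).2.le.trans' (by omega)
  · show _ < its (nxtF B) (j + 1)
    simp only [its, nxtF]
    omega

end nxt

/-- transfer: if every block meets B and a splits J, then a splits B -/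
lemma splits_of_splitsIP {B a : Set ℕ} {J : ℕ → Set ℕ}
    (hd : (Set.univ : Set ℕ).PairwiseDisjoint J)
    (hmeets : ∀ k, (J k ∩ B).Nonempty)
    (h : SplitsIP a J) : Splits a B := by
  have hd' : (Set.univ : Set ℕ).PairwiseDisjoint (fun k => J k ∩ B) := by
    intro i hi j hj hij
    exact (hd hi hj hij).mono (Set.inter_subset_left) (Set.inter_subset_left)
  constructor
  · apply lemC hd' hmeets
    apply h.1.mono
    intro k hk
    exact fun x hx => ⟨hk hx.1, hx.2⟩
  · apply lemC hd' hmeets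
    apply h.2.mono
    intro k hk x hx
    exact ⟨hx.2, hk hx.1⟩

/-- every interval partition is split by some infinite set -/
lemma exists_splitsIP {J : ℕ → Set ℕ} (hJ : IsIntervalPartition J) :
    ∃ a : Set ℕ, a.Infinite ∧ SplitsIP a J := by
  refine ⟨⋃ i, J (2 * i), ?_, ?_, ?_⟩
  · apply lemC hJ.2.2.2.2.1 hJ.2.1
    apply infinite_of_forall_ge
    intro M
    exact ⟨2 * M, by omega, Set.subset_iUnion (fun i => J (2 * i)) M⟩
  · apply infinite_of_forall_ge
    intro M
    exact ⟨2 * M, by omega, Set.subset_iUnion (fun i => J (2 * i)) M⟩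
  · apply infinite_of_forall_ge
    intro M
    refine ⟨2 * M + 1, by omega, ?_⟩
    intro x hx
    simp only [Set.mem_compl_iff, Set.mem_iUnion]
    rintro ⟨i, hi⟩
    have hne : 2 * i ≠ 2 * M + 1 := by omega
    exact Set.disjoint_left.mp
      (hJ.2.2.2.2.1 (Set.mem_univ (2 * i)) (Set.mem_univ (2 * M + 1)) hne) hi hx

end FSAux
namespace FSAux

lemma union_ipOf_infinite {f : ℕ → ℕ} (hid : ∀ n, n < f n) {s : Set ℕ} (hs : s.Infinite) :
    (⋃ j ∈ s, ipOf f j).Infinite := by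
  apply lemC (ipOf_isIP hid).2.2.2.2.1 (ipOf_isIP hid).2.1
  apply hs.mono
  intro j hj
  exact Set.subset_iUnion₂ (s := fun j (_ : j ∈ s) => ipOf f j) j hj

lemma ipOf_meets_of_domLT {X : Set ℕ} (hX : X.Infinite) {g : ℕ → ℕ}
    (hdom : DomLT (nxtF X) g) :
    ∃ N, ∀ k, N ≤ k → (ipOf (majSM g) k ∩ X).Nonempty := by
  obtain ⟨N, hN⟩ := Filter.eventually_atTop.mp hdom
  refine ⟨N, fun k hk => ?_⟩
  have hck : N ≤ its (majSM g) k := le_trans hk (le_its (lt_majSM g) k)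
  set c := its (majSM g) k with hc
  refine ⟨sInf {m | m ∈ X ∧ c < m}, ⟨?_, ?_⟩, (nxt_spec hX c).1⟩
  · exact (nxt_spec hX c).2.le
  · show _ < its (majSM g) (k + 1)
    have h1 : nxtF X c < g c := hN c hck
    have h2 : g c ≤ majSM g c := le_majSM g c
    have h3 : its (majSM g) (k + 1) = majSM g c := rfl
    rw [nxtF] at h1
    omega

lemma bFam_infinite {F : Set (ℕ → ℕ)} (hF : ∀ g : ℕ → ℕ, ∃ f ∈ F, ¬ DomLT f g) :
    F.Infinite := by
  intro hfin
  obtain ⟨f, hfF, hnd⟩ := hF (fun n => (hfin.toFinset.sup fun f => f n) + 1)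
  apply hnd
  apply Filter.Eventually.of_forall
  intro n
  exact Nat.lt_succ_of_le (Finset.le_sup (f := fun g => g n) (hfin.mem_toFinset.mpr hfF))

lemma fs_set_nonempty : { c | ∃ A : Set (Set ℕ), (∀ a ∈ A, a.Infinite) ∧
    (∀ J : ℕ → Set ℕ, IsIntervalPartition J → ∃ a ∈ A, SplitsIP a J) ∧ #A = c }.Nonempty := by
  refine ⟨_, {a : Set ℕ | a.Infinite}, fun a ha => ha, fun J hJ => ?_, rfl⟩
  obtain ⟨a, h1, h2⟩ := exists_splitsIP hJ
  exact ⟨a, h1, h2⟩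

lemma b_set_nonempty : { c | ∃ F : Set (ℕ → ℕ),
    (∀ g : ℕ → ℕ, ∃ f ∈ F, ¬ DomLT f g) ∧ #F = c }.Nonempty := by
  refine ⟨_, Set.univ, fun g => ⟨g, Set.mem_univ g, fun h => ?_⟩, rfl⟩
  obtain ⟨n, hn⟩ := h.exists
  omega

lemma s_set_nonempty : { c | ∃ S : Set (Set ℕ), (∀ A ∈ S, A.Infinite) ∧
    (∀ B : Set ℕ, B.Infinite → ∃ A ∈ S, Splits A B) ∧ #S = c }.Nonempty := by
  refine ⟨_, {A : Set ℕ | A.Infinite}, fun A hA => hA, fun B hB => ?_, rfl⟩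
  obtain ⟨a, h1, h2⟩ := exists_splitsIP (ipOf_isIP (nxtF_gt hB))
  exact ⟨a, h1, splits_of_splitsIP (ipOf_isIP (nxtF_gt hB)).2.2.2.2.1
    (ipOf_nxtF_meets hB) h2⟩

lemma d_set_nonempty : { c | ∃ D : Set (ℕ → ℕ),
    (∀ f : ℕ → ℕ, ∃ g ∈ D, DomLT f g) ∧ #D = c }.Nonempty :=
  ⟨_, Set.univ, fun f => ⟨fun n => f n + 1, Set.mem_univ _,
    Filter.Eventually.of_forall fun n => Nat.lt_succ_self _⟩, rfl⟩

lemma r_set_nonempty : { c | ∃ R : Set (Set ℕ), (∀ B ∈ R, B.Infinite) ∧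
    (¬ ∃ A : Set ℕ, A.Infinite ∧ ∀ B ∈ R, Splits A B) ∧ #R = c }.Nonempty := by
  refine ⟨_, {B : Set ℕ | B.Infinite}, fun B hB => hB, ?_, rfl⟩
  rintro ⟨A, hA, hsp⟩
  have := (hsp A hA).2
  rw [Set.diff_self] at this
  exact this Set.finite_empty

lemma fr_set_nonempty : { c | ∃ D : Set (ℕ → Set ℕ), (∀ J ∈ D, IsIntervalPartition J) ∧
    (¬ ∃ a : Set ℕ, a.Infinite ∧ ∀ J ∈ D, SplitsIP a J) ∧ #D = c }.Nonempty := by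
  refine ⟨_, {J : ℕ → Set ℕ | IsIntervalPartition J}, fun J hJ => hJ, ?_, rfl⟩
  rintro ⟨a, ha, hsp⟩
  by_cases hc : (aᶜ).Infinite
  · have hJ : IsIntervalPartition (ipOf (nxtF aᶜ)) := ipOf_isIP (nxtF_gt hc)
    obtain ⟨k, hk⟩ := (hsp _ hJ).1.nonempty
    obtain ⟨x, hx1, hx2⟩ := ipOf_nxtF_meets hc k
    exact hx2 (hk hx1)
  · rw [Set.not_infinite] at hc
    have hJ : IsIntervalPartition (ipOf (fun n => n + 1)) :=
      ipOf_isIP (fun n => Nat.lt_succ_self n)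
    exact (lemC hJ.2.2.2.2.1 hJ.2.1 (hsp _ hJ).2) hc
end FSAux
namespace FSAux

lemma s_le_fs : sNumber ≤ fsNumber := by
  obtain ⟨A, hAinf, hAsp, hAc⟩ := csInf_mem fs_set_nonempty
  rw [show fsNumber = #A from hAc.symm]
  apply csInf_le'
  refine ⟨A, hAinf, fun B hB => ?_, rfl⟩
  obtain ⟨a, haA, hsp⟩ := hAsp _ (ipOf_isIP (nxtF_gt hB))
  exact ⟨a, haA, splits_of_splitsIP (ipOf_isIP (nxtF_gt hB)).2.2.2.2.1
    (ipOf_nxtF_meets hB) hsp⟩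

lemma b_le_fs : bNumber ≤ fsNumber := by
  obtain ⟨A, hAinf, hAsp, hAc⟩ := csInf_mem fs_set_nonempty
  rw [show fsNumber = #A from hAc.symm]
  refine le_trans (csInf_le' ⟨(fun a : Set ℕ => nxtF a) '' A, ?_, rfl⟩) (Cardinal.mk_image_le)
  intro g
  by_contra hcon
  push_neg at hcon
  obtain ⟨a, haA, hsp⟩ := hAsp _ (ipOf_isIP (lt_majSM g))
  have hdom : DomLT (nxtF a) g := hcon (nxtF a) ⟨a, haA, rfl⟩
  obtain ⟨N, hN⟩ := ipOf_meets_of_domLT (hAinf a haA) hdom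
  obtain ⟨k, hk, hsub⟩ := exists_ge_of_infinite hsp.2 N
  obtain ⟨x, hx1, hx2⟩ := hN k hk
  exact (hsub hx1) hx2

lemma fs_le_max : fsNumber ≤ max bNumber sNumber := by
  obtain ⟨F, hF, hFc⟩ := csInf_mem b_set_nonempty
  obtain ⟨S, hSinf, hSsp, hSc⟩ := csInf_mem s_set_nonempty
  set Φ : (ℕ → ℕ) × Set ℕ → Set ℕ :=
    fun p => ⋃ j ∈ p.2, ipOf (majSM p.1) j with hΦ
  have hmem : fsNumber ≤ #(Φ '' (F ×ˢ S)) := by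
    apply csInf_le'
    refine ⟨Φ '' (F ×ˢ S), ?_, ?_, rfl⟩
    · rintro a ⟨⟨f, s⟩, ⟨hfF, hsS⟩, rfl⟩
      exact union_ipOf_infinite (lt_majSM f) (hSinf s hsS)
    · intro J hJ
      obtain ⟨f, hfF, hnd⟩ := hF (fun n => GJ J (GJ J n))
      have hinf : {n | GJ J (GJ J n) ≤ majSM f n}.Infinite := by
        apply (not_domLT_infinite hnd).mono
        intro n hn
        exact le_trans hn (le_majSM f n)
      have hB := lemA hJ (majSM_strictMono f).monotone (lt_majSM f) hinf
      obtain ⟨s, hsS, hs1, hs2⟩ := hSsp _ hB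
      exact ⟨Φ (f, s), ⟨(f, s), ⟨hfF, hsS⟩, rfl⟩, lemB hJ (lt_majSM f) hs1 hs2⟩
  have h2 : #(Φ '' (F ×ˢ S)) ≤ #F * #S := by
    refine le_trans Cardinal.mk_image_le ?_
    rw [Cardinal.mk_congr (Equiv.Set.prod F S), Cardinal.mk_prod,
      Cardinal.lift_id, Cardinal.lift_id]
  have hFinf : ℵ₀ ≤ #F := by
    rw [Cardinal.aleph0_le_mk_iff]
    exact Set.infinite_coe_iff.mpr (bFam_infinite hF)
  have h3 : #F * #S ≤ max bNumber sNumber := by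
    rw [show bNumber = #F from hFc.symm, show sNumber = #S from hSc.symm]
    refine le_trans (Cardinal.mul_le_max _ _) ?_
    exact max_le (le_refl _) (le_trans hFinf (le_max_left _ _))
  exact le_trans hmem (le_trans h2 h3)

lemma fr_le_d : frNumber ≤ dNumber := by
  obtain ⟨D₀, hD₀, hD₀c⟩ := csInf_mem d_set_nonempty
  rw [show dNumber = #D₀ from hD₀c.symm]
  refine le_trans (csInf_le' ⟨(fun g => ipOf (majSM g)) '' D₀, ?_, ?_, rfl⟩)
    Cardinal.mk_image_le
  · rintro J ⟨g, hg, rfl⟩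
    exact ipOf_isIP (lt_majSM g)
  · rintro ⟨a, ha, hsp⟩
    by_cases hc : (aᶜ).Infinite
    · obtain ⟨g, hgD, hdom⟩ := hD₀ (nxtF aᶜ)
      obtain ⟨N, hN⟩ := ipOf_meets_of_domLT hc hdom
      obtain ⟨k, hk, hsub⟩ := exists_ge_of_infinite (hsp _ ⟨g, hgD, rfl⟩).1 N
      obtain ⟨x, hx1, hx2⟩ := hN k hk
      exact hx2 (hsub hx1)
    · rw [Set.not_infinite] at hc
      obtain ⟨g, hgD, -⟩ := hD₀ id
      have hJ := ipOf_isIP (lt_majSM g)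
      exact (lemC hJ.2.2.2.2.1 hJ.2.1 (hsp _ ⟨g, hgD, rfl⟩).2) hc

lemma fr_le_r : frNumber ≤ rNumber := by
  obtain ⟨R, hRinf, hRr, hRc⟩ := csInf_mem r_set_nonempty
  rw [show rNumber = #R from hRc.symm]
  refine le_trans (csInf_le' ⟨(fun B => ipOf (nxtF B)) '' R, ?_, ?_, rfl⟩)
    Cardinal.mk_image_le
  · rintro J ⟨B, hB, rfl⟩
    exact ipOf_isIP (nxtF_gt (hRinf B hB))
  · rintro ⟨a, ha, hsp⟩
    refine hRr ⟨a, ha, fun B hB => ?_⟩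
    exact splits_of_splitsIP (ipOf_isIP (nxtF_gt (hRinf B hB))).2.2.2.2.1
      (ipOf_nxtF_meets (hRinf B hB)) (hsp _ ⟨B, hB, rfl⟩)

lemma min_le_fr : min dNumber rNumber ≤ frNumber := by
  obtain ⟨D, hD, hDuns, hDc⟩ := csInf_mem fr_set_nonempty
  rw [show frNumber = #D from hDc.symm]
  by_cases hcase : ∀ f : ℕ → ℕ, ∃ J ∈ D, DomLT f (fun n => GJ J (GJ J n))
  · refine le_trans (min_le_left _ _) (le_trans (csInf_le'
      ⟨(fun J => fun n => GJ J (GJ J n)) '' D, ?_, rfl⟩) Cardinal.mk_image_le)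
    intro f
    obtain ⟨J, hJ, hd⟩ := hcase f
    exact ⟨_, ⟨J, hJ, rfl⟩, hd⟩
  · push_neg at hcase
    obtain ⟨f, hf⟩ := hcase
    refine le_trans (min_le_right _ _) (le_trans (csInf_le'
      ⟨(fun J => {j | ∃ k, J k ⊆ ipOf (majSM f) j}) '' D, ?_, ?_, rfl⟩)
      Cardinal.mk_image_le)
    · rintro B ⟨J, hJ, rfl⟩
      refine lemA (hD J hJ) (majSM_strictMono f).monotone (lt_majSM f) ?_
      apply (not_domLT_infinite (hf J hJ)).mono
      intro n hn
      exact le_trans hn (le_majSM f n)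
    · rintro ⟨s, hs, hsp⟩
      refine hDuns ⟨⋃ j ∈ s, ipOf (majSM f) j,
        union_ipOf_infinite (lt_majSM f) hs, fun J hJ => ?_⟩
      exact lemB (hD J hJ) (lt_majSM f) (hsp _ ⟨J, hJ, rfl⟩).1 (hsp _ ⟨J, hJ, rfl⟩).2

end FSAux


/-- `𝔣𝔰 = 𝔟_▷ = max{𝔟, 𝔰}` and `𝔣𝔯 = 𝔡_▷ = min{𝔡, 𝔯}`. -/
theorem fsNumber_eq_max_and_frNumber_eq_min :
    fsNumber = max bNumber sNumber ∧ frNumber = min dNumber rNumber :=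
  ⟨le_antisymm FSAux.fs_le_max (max_le FSAux.b_le_fs FSAux.s_le_fs),
   le_antisymm (le_min FSAux.fr_le_d FSAux.fr_le_r) FSAux.min_le_fr⟩
end
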